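/- arXiv:1009.3188 — 7 statements merged into one kernel-verified Lean document; each statement's English description precedes it below -/
import Mathlib

section
/- A compact convex set P in R^N is a polytope if and only if for every point x in P there exists a real number δ > 0 such that for every y in R^N with 0 < ‖x − y‖ < δ, if the open segment (x, y) meets P, then y belongs to P. -/
open Set

open Finset in
lemma cone_lemma {N : ℕ} (n : ℕ) : ∀ (s : Finset (Fin N → ℝ)), s.card ≤ n →
    ∀ (φ : (Fin N → ℝ) → (Fin N → ℝ)),
    ∃ δ : ℝ, 0 < δ ∧ ∀ t : (Fin N → ℝ) → ℝ, (∀ i ∈ s, 0 ≤ t i) →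
      ‖∑ i ∈ s, t i • φ i‖ < δ →
      ∃ u : (Fin N → ℝ) → ℝ, (∀ i ∈ s, 0 ≤ u i) ∧ (∑ i ∈ s, u i) ≤ 1 ∧
        ∑ i ∈ s, u i • φ i = ∑ i ∈ s, t i • φ i := by
  classical
  induction n with
  | zero =>
    intro s hcard φ
    rw [Nat.le_zero, Finset.card_eq_zero] at hcard
    subst hcard
    exact ⟨1, one_pos, fun t _ _ => ⟨fun _ => 0, by simp, by simp, rfl⟩⟩
  | succ n IH =>
    intro s hcard φ
    by_cases hdep : ∃ lam : (Fin N → ℝ) → ℝ, (∀ i ∈ s, 0 ≤ lam i) ∧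
        (∑ i ∈ s, lam i • φ i = 0) ∧ ∃ j ∈ s, 0 < lam j
    · obtain ⟨lam, hlam0, hlamsum, j₀, hj₀s, hj₀⟩ := hdep
      set S : Finset (Fin N → ℝ) := s.filter (fun j => 0 < lam j) with hS
      have hSne : S.Nonempty := ⟨j₀, Finset.mem_filter.2 ⟨hj₀s, hj₀⟩⟩
      have hSsub : S ⊆ s := Finset.filter_subset _ _
      -- for each j in S, apply IH to s.erase j
      have hIH : ∀ j ∈ S, ∃ δ : ℝ, 0 < δ ∧ ∀ t : (Fin N → ℝ) → ℝ,
          (∀ i ∈ s.erase j, 0 ≤ t i) → ‖∑ i ∈ s.erase j, t i • φ i‖ < δ →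
          ∃ u : (Fin N → ℝ) → ℝ, (∀ i ∈ s.erase j, 0 ≤ u i) ∧ (∑ i ∈ s.erase j, u i) ≤ 1 ∧
            ∑ i ∈ s.erase j, u i • φ i = ∑ i ∈ s.erase j, t i • φ i := by
        intro j hj
        refine IH (s.erase j) ?_ φ
        have := Finset.card_erase_of_mem (hSsub hj)
        omega
      choose! δf hδf0 hδf using hIH
      refine ⟨S.inf' hSne δf, ?_, ?_⟩
      · rw [Finset.lt_inf'_iff]
        exact fun j hj => hδf0 j hj
      intro t ht0 htnorm
      -- pick minimizer of t j / lam j over S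
      obtain ⟨j₁, hj₁S, hj₁min⟩ := S.exists_min_image (fun j => t j / lam j) hSne
      have hj₁s : j₁ ∈ s := hSsub hj₁S
      have hlamj₁ : 0 < lam j₁ := (Finset.mem_filter.1 hj₁S).2
      set c : ℝ := t j₁ / lam j₁ with hc
      have hc0 : 0 ≤ c := div_nonneg (ht0 j₁ hj₁s) hlamj₁.le
      set t' : (Fin N → ℝ) → ℝ := fun i => t i - c * lam i with ht'
      have ht'0 : ∀ i ∈ s, 0 ≤ t' i := by
        intro i hi
        by_cases hiS : i ∈ S
        · have hlami : 0 < lam i := (Finset.mem_filter.1 hiS).2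
          have := hj₁min i hiS
          have : c * lam i ≤ t i := by
            rwa [← le_div_iff₀ hlami]
          simp only [ht']; linarith
        · have hlz : lam i = 0 := by
            rcases (hlam0 i hi).eq_or_lt with h | h
            · exact h.symm
            · exact absurd (Finset.mem_filter.2 ⟨hi, h⟩) hiS
          simp [ht', hlz, ht0 i hi]
      have ht'j₁ : t' j₁ = 0 := by
        simp only [ht', hc]
        field_simp
        ring
      have hsum_eq : ∑ i ∈ s.erase j₁, t' i • φ i = ∑ i ∈ s, t i • φ i := by
        rw [Finset.sum_erase _ (by rw [ht'j₁, zero_smul])]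
        have : ∀ i ∈ s, t' i • φ i = t i • φ i - (c * lam i) • φ i := by
          intro i _; simp [ht', sub_smul]
        rw [Finset.sum_congr rfl this, Finset.sum_sub_distrib]
        have : ∑ i ∈ s, (c * lam i) • φ i = c • ∑ i ∈ s, lam i • φ i := by
          rw [Finset.smul_sum]
          exact Finset.sum_congr rfl fun i _ => by rw [smul_smul]
        rw [this, hlamsum, smul_zero, sub_zero]
      have hnorm' : ‖∑ i ∈ s.erase j₁, t' i • φ i‖ < δf j₁ := by
        rw [hsum_eq]
        exact lt_of_lt_of_le htnorm (Finset.inf'_le _ hj₁S)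
      obtain ⟨u, hu0, huT, husum⟩ := hδf j₁ hj₁S t'
        (fun i hi => ht'0 i (Finset.mem_of_mem_erase hi)) hnorm'
      refine ⟨fun i => if i = j₁ then 0 else u i, ?_, ?_, ?_⟩
      · intro i hi
        by_cases h : i = j₁ <;> simp [h]
        exact hu0 i (Finset.mem_erase.2 ⟨h, hi⟩)
      · rw [← Finset.sum_erase_add _ _ hj₁s]
        show (∑ i ∈ s.erase j₁, (if i = j₁ then (0:ℝ) else u i)) +
          (if j₁ = j₁ then (0:ℝ) else u j₁) ≤ 1
        rw [if_pos rfl, add_zero,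
          Finset.sum_congr rfl (fun i hi => if_neg (Finset.mem_erase.1 hi).1)]
        exact huT
      · rw [← Finset.sum_erase_add _ _ hj₁s]
        show (∑ i ∈ s.erase j₁, (if i = j₁ then (0:ℝ) else u i) • φ i) +
          (if j₁ = j₁ then (0:ℝ) else u j₁) • φ j₁ = ∑ i ∈ s, t i • φ i
        rw [if_pos rfl, zero_smul, add_zero,
          Finset.sum_congr rfl (fun i hi => by
            rw [if_neg (Finset.mem_erase.1 hi).1] : ∀ i ∈ s.erase j₁,
              (if i = j₁ then (0:ℝ) else u i) • φ i = u i • φ i),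
          husum, hsum_eq]
    · -- positively independent case
      rcases Finset.eq_empty_or_nonempty s with rfl | hsne
      · exact ⟨1, one_pos, fun t _ _ => ⟨fun _ => 0, by simp, by simp, rfl⟩⟩
      set K : Set (Fin N → ℝ) :=
        (fun w : {x // x ∈ s} → ℝ => ∑ i : {x // x ∈ s}, w i • φ i) '' stdSimplex ℝ {x // x ∈ s}
        with hK
      have hKcomp : IsCompact K :=
        (isCompact_stdSimplex _ _).image
          (continuous_finset_sum _ fun i _ => (continuous_apply i).smul continuous_const)
      have hKne : K.Nonempty := by
        obtain ⟨i₀, hi₀⟩ := hsne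
        exact ⟨_, Set.mem_image_of_mem _ (ite_eq_mem_stdSimplex ℝ (⟨i₀, hi₀⟩ : {x // x ∈ s}))⟩
      have h0K : (0 : Fin N → ℝ) ∉ K := by
        rintro ⟨w, hw, hw0⟩
        apply hdep
        refine ⟨fun v => if h : v ∈ s then w ⟨v, h⟩ else 0, ?_, ?_, ?_⟩
        · intro i hi; simp only [dif_pos hi]; exact hw.1 _
        · rw [← Finset.sum_attach s (fun i => (if h : i ∈ s then w ⟨i, h⟩ else 0) • φ i)]
          rw [← hw0, ← Finset.univ_eq_attach]
          exact Finset.sum_congr rfl fun i _ => by rw [dif_pos i.2]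
        · -- some w i > 0
          have h1 : (0:ℝ) < ∑ i : {x // x ∈ s}, w i := by rw [hw.2]; norm_num
          obtain ⟨i, -, hi⟩ := Finset.exists_lt_of_sum_lt
            (s := (Finset.univ : Finset {x // x ∈ s})) (f := fun _ => (0:ℝ)) (g := w)
            (by simpa using h1)
          exact ⟨i, i.2, by simp only [dif_pos i.2]; exact hi⟩
      have hδpos : 0 < Metric.infDist 0 K :=
        ((hKcomp.isClosed.notMem_iff_infDist_pos hKne).1 h0K)
      refine ⟨Metric.infDist 0 K, hδpos, ?_⟩
      intro t ht0 htnorm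
      by_cases hT : ∑ i ∈ s, t i ≤ 1
      · exact ⟨t, ht0, hT, rfl⟩
      exfalso
      push_neg at hT
      set T : ℝ := ∑ i ∈ s, t i with hTdef
      have hTpos : 0 < T := lt_trans one_pos hT
      set w : {x // x ∈ s} → ℝ := fun i => t i / T with hwdef
      have hwmem : w ∈ stdSimplex ℝ {x // x ∈ s} := by
        constructor
        · exact fun i => div_nonneg (ht0 i i.2) hTpos.le
        · have hts : ∑ i : {x // x ∈ s}, t ↑i = T := by
            rw [Finset.univ_eq_attach]; exact Finset.sum_attach s t
          simp only [hwdef]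
          rw [← Finset.sum_div, hts, div_self hTpos.ne']
      set u₀ : Fin N → ℝ := ∑ i : {x // x ∈ s}, w i • φ i with hu₀
      have hu₀K : u₀ ∈ K := ⟨w, hwmem, rfl⟩
      have hvT : ∑ i ∈ s, t i • φ i = T • u₀ := by
        rw [hu₀, Finset.smul_sum, ← Finset.sum_attach s (fun i => t i • φ i),
          ← Finset.univ_eq_attach]
        refine Finset.sum_congr rfl fun i _ => ?_
        simp only [hwdef]
        rw [smul_smul, mul_div_cancel₀ _ hTpos.ne']
      have hd1 : Metric.infDist 0 K ≤ ‖u₀‖ := by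
        have h := Metric.infDist_le_dist_of_mem (x := (0 : Fin N → ℝ)) hu₀K
        rwa [dist_zero_left] at h
      have hd2 : ‖∑ i ∈ s, t i • φ i‖ = T * ‖u₀‖ := by
        rw [hvT, norm_smul, Real.norm_eq_abs, abs_of_pos hTpos]
      nlinarith [htnorm, hd1, hd2, hδpos, norm_nonneg u₀]

/-- A polytope in `ℝ^N`: the convex hull of finitely many points. -/
def IsPolytope {N : ℕ} (P : Set (Fin N → ℝ)) : Prop :=
  ∃ s : Finset (Fin N → ℝ), P = convexHull ℝ (s : Set (Fin N → ℝ))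

/-- A compact convex set `P ⊆ ℝ^N` is a polytope iff for every `x ∈ P` there is `δ > 0`
such that for every `y` with `0 < ‖x - y‖ < δ`, if the open segment `(x, y)` meets `P`,
then `y ∈ P`. -/
theorem polytope_iff_local_extension {N : ℕ} (P : Set (Fin N → ℝ))
    (hPc : IsCompact P) (hPconv : Convex ℝ P) :
    IsPolytope P ↔
      ∀ x ∈ P, ∃ δ : ℝ, 0 < δ ∧ ∀ y : Fin N → ℝ,
        0 < ‖x - y‖ → ‖x - y‖ < δ →
        (openSegment ℝ x y ∩ P).Nonempty → y ∈ P := by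
  classical
  constructor
  · rintro ⟨s, rfl⟩
    intro x hx
    obtain ⟨δ, hδpos, hδ⟩ := cone_lemma s.card s le_rfl (fun p => p - x)
    refine ⟨δ, hδpos, ?_⟩
    rintro y hy0 hyδ ⟨z, hzseg, hzP⟩
    obtain ⟨a, b, ha, hb, hab, hz⟩ := hzseg
    rw [Finset.convexHull_eq] at hzP
    obtain ⟨w, hw0, hw1, hwz⟩ := hzP
    have hzsum : ∑ p ∈ s, w p • p = z := by
      rw [← hwz, Finset.centerMass_eq_of_sum_1 _ _ hw1]; rfl
    -- ∑ w p • (p - x) = z - x = b • (y - x)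
    have h1 : ∑ p ∈ s, w p • (p - x) = b • (y - x) := by
      have : ∑ p ∈ s, w p • (p - x) = (∑ p ∈ s, w p • p) - (∑ p ∈ s, w p) • x := by
        rw [Finset.sum_smul]
        simp [smul_sub, Finset.sum_sub_distrib]
      rw [this, hzsum, hw1, one_smul, ← hz]
      have hab' : a = 1 - b := by linarith
      rw [hab']
      module
    have h2 : ∑ p ∈ s, (b⁻¹ * w p) • (p - x) = y - x := by
      have : ∑ p ∈ s, (b⁻¹ * w p) • (p - x) = b⁻¹ • ∑ p ∈ s, w p • (p - x) := by
        rw [Finset.smul_sum]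
        exact Finset.sum_congr rfl fun p _ => by rw [smul_smul]
      rw [this, h1, smul_smul, inv_mul_cancel₀ hb.ne', one_smul]
    obtain ⟨u, hu0, huT, husum⟩ := hδ (fun p => b⁻¹ * w p)
      (fun p hp => mul_nonneg (inv_nonneg.2 hb.le) (hw0 p hp))
      (by rw [h2, norm_sub_rev]; exact hyδ)
    rw [h2] at husum
    set T : ℝ := ∑ p ∈ s, u p with hTdef
    have hT0 : 0 ≤ T := Finset.sum_nonneg hu0
    have hsum_split : ∑ p ∈ s, u p • (p - x) = (∑ p ∈ s, u p • p) - T • x := by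
      rw [hTdef, Finset.sum_smul]
      simp [smul_sub, Finset.sum_sub_distrib]
    rcases hT0.eq_or_lt with hT | hT
    · -- T = 0 : all u p = 0, so y = x
      have hall : ∀ p ∈ s, u p = 0 := by
        intro p hp
        exact (Finset.sum_eq_zero_iff_of_nonneg hu0).1 hT.symm p hp
      have : y - x = 0 := by
        rw [← husum, Finset.sum_eq_zero]
        intro p hp; rw [hall p hp, zero_smul]
      have hyx : y = x := by
        have := sub_eq_zero.1 this; exact this
      rw [hyx]; exact hx
    · have hq : s.centerMass u id ∈ convexHull ℝ (s : Set (Fin N → ℝ)) :=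
        s.centerMass_mem_convexHull hu0 (by rw [← hTdef]; exact hT)
          (fun p hp => Finset.mem_coe.2 hp)
      have hTq : T • s.centerMass u id = ∑ p ∈ s, u p • p := by
        rw [Finset.centerMass, smul_smul, ← hTdef, mul_inv_cancel₀ hT.ne', one_smul]; rfl
      have hy : y = (1 - T) • x + T • s.centerMass u id := by
        have : y = x + ((∑ p ∈ s, u p • p) - T • x) := by
          rw [← hsum_split, husum]; module
        rw [this, hTq]; module
      rw [hy]
      exact convex_convexHull ℝ (s : Set (Fin N → ℝ)) hx hq (by linarith) hT0 (by ring)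
  · intro h
    -- Step 1: near every point of P there is at most one extreme point
    have key : ∀ z ∈ P, ∃ δ : ℝ, 0 < δ ∧
        ∀ e ∈ P.extremePoints ℝ, dist e z < δ → e = z := by
      intro z hz
      obtain ⟨δ, hδpos, hδ⟩ := h z hz
      refine ⟨δ / 2, half_pos hδpos, ?_⟩
      intro e he hdist
      by_contra hne
      have heP : e ∈ P := he.1
      set y : Fin N → ℝ := z + (3/2 : ℝ) • (e - z) with hy
      have hez : 0 < ‖e - z‖ := by
        rw [norm_pos_iff]; exact sub_ne_zero.2 hne
      have hzy : z - y = -((3/2 : ℝ) • (e - z)) := by rw [hy]; module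
      have hny : ‖z - y‖ = (3/2 : ℝ) * ‖e - z‖ := by
        rw [hzy, norm_neg, norm_smul, Real.norm_eq_abs]
        norm_num
      have h1 : 0 < ‖z - y‖ := by rw [hny]; positivity
      have h2 : ‖z - y‖ < δ := by
        rw [hny]
        have : ‖e - z‖ = dist e z := (dist_eq_norm e z).symm
        rw [this]
        linarith
      have h3 : e ∈ openSegment ℝ z y := by
        refine ⟨1/3, 2/3, by norm_num, by norm_num, by norm_num, ?_⟩
        rw [hy]; module
      have hyP : y ∈ P := hδ y h1 h2 ⟨e, h3, heP⟩
      exact hne ((he.2 hz hyP h3).symm)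
    choose! δf hδf0 hδf using key
    -- Step 2: extreme points are finite
    obtain ⟨tc, htc⟩ := hPc.elim_nhds_subcover' (fun z hz => Metric.ball z (δf z))
      (fun z hz => Metric.ball_mem_nhds z (hδf0 z hz))
    have hEfin : (P.extremePoints ℝ).Finite := by
      refine Set.Finite.subset (tc.finite_toSet.image Subtype.val) ?_
      intro e he
      have heP : e ∈ P := he.1
      obtain ⟨z, hzt, hez⟩ := Set.mem_iUnion₂.1 (htc heP)
      have : e = (z : Fin N → ℝ) := hδf z z.2 e he (Metric.mem_ball.1 hez)
      exact ⟨z, hzt, this.symm⟩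
    -- Step 3: Krein-Milman
    have hKM : closure (convexHull ℝ (P.extremePoints ℝ)) = P :=
      closure_convexHull_extremePoints hPc hPconv
    have hclosed : IsClosed (convexHull ℝ (P.extremePoints ℝ)) :=
      hEfin.isClosed_convexHull (𝕜 := ℝ)
    refine ⟨hEfin.toFinset, ?_⟩
    rw [hEfin.coe_toFinset]
    exact (hKM.symm.trans hclosed.closure_eq)
end

section
/- Let P ⊆ R^N be a polytope not containing the origin and D = R_+ · P. Let Σ ∈ D \ {0}, let Σ_m be a sequence of distinct points of R^N converging to Σ, let S ∈ R^N \ {0}, let c_m ≥ 0 be a bounded sequence of reals, and set Γ_m = Σ_m − c_m S. Assume the open segment (Σ, Γ_m) meets D for every m. Then for infinitely many m there exists a point P_m in the closed segment [Σ_m, Γ_m] lying in D. -/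
open Set Filter Topology

variable {N : ℕ}

/-- The convex cone generated by a finite set of vectors: all nonnegative combinations. -/
def coneF (G : Finset (Fin N → ℝ)) : Set (Fin N → ℝ) :=
  {x | ∃ β : (Fin N → ℝ) → ℝ, (∀ v ∈ G, 0 ≤ β v) ∧ x = ∑ v ∈ G, β v • v}

lemma coneF_mono {G H : Finset (Fin N → ℝ)} (hGH : G ⊆ H) : coneF G ⊆ coneF H := by
  rintro x ⟨β, hβ, rfl⟩
  classical
  refine ⟨fun v => if v ∈ G then β v else 0, fun v _ => ?_, ?_⟩
  · simp only; split
    · exact hβ _ ‹_›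
    · exact le_refl _
  · rw [← Finset.sum_subset hGH]
    · exact Finset.sum_congr rfl fun v hv => by simp [hv]
    · intro v _ hv; simp [hv]

lemma mem_coneF_self {G : Finset (Fin N → ℝ)} {v : Fin N → ℝ} (hv : v ∈ G) : v ∈ coneF G := by
  classical
  refine ⟨fun w => if w = v then 1 else 0, fun w _ => by simp only; split <;> norm_num, ?_⟩
  rw [Finset.sum_eq_single v] <;> simp +contextual [hv]

lemma coneF_add {G : Finset (Fin N → ℝ)} {x y : Fin N → ℝ} (hx : x ∈ coneF G) (hy : y ∈ coneF G) :
    x + y ∈ coneF G := by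
  obtain ⟨β, hβ, rfl⟩ := hx; obtain ⟨γ, hγ, rfl⟩ := hy
  exact ⟨β + γ, fun v hv => add_nonneg (hβ v hv) (hγ v hv), by
    rw [← Finset.sum_add_distrib]; exact Finset.sum_congr rfl fun v _ => (add_smul _ _ _).symm⟩

lemma coneF_smul {G : Finset (Fin N → ℝ)} {x : Fin N → ℝ} {t : ℝ} (ht : 0 ≤ t)
    (hx : x ∈ coneF G) : t • x ∈ coneF G := by
  obtain ⟨β, hβ, rfl⟩ := hx
  exact ⟨t • β, fun v hv => mul_nonneg ht (hβ v hv), by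
    rw [Finset.smul_sum]; exact Finset.sum_congr rfl fun v _ => (smul_smul _ _ _)⟩

lemma coneF_zero {G : Finset (Fin N → ℝ)} : (0 : Fin N → ℝ) ∈ coneF G :=
  ⟨0, fun v _ => le_refl _, by simp⟩

lemma cone_drop {G : Finset (Fin N → ℝ)} {x : Fin N → ℝ} {β g : (Fin N → ℝ) → ℝ}
    (hβ : ∀ v ∈ G, 0 ≤ β v) (hx : x = ∑ v ∈ G, β v • v)
    (hg0 : ∑ v ∈ G, g v • v = 0) (hpos : ∃ v ∈ G, 0 < g v) :
    ∃ v₀ ∈ G, x ∈ coneF (G.erase v₀) := by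
  classical
  obtain ⟨w, hwG, hw⟩ := hpos
  set F := G.filter (fun v => 0 < g v) with hF
  have hFne : F.Nonempty := ⟨w, Finset.mem_filter.2 ⟨hwG, hw⟩⟩
  obtain ⟨v₀, hv₀F, hr⟩ := Finset.exists_mem_eq_inf' hFne (fun v => β v / g v)
  set r := F.inf' hFne (fun v => β v / g v) with hrdef
  have hv₀G : v₀ ∈ G := (Finset.mem_filter.1 hv₀F).1
  have hgv₀ : 0 < g v₀ := (Finset.mem_filter.1 hv₀F).2
  have hrge : 0 ≤ r := by
    rw [hr]; exact div_nonneg (hβ _ hv₀G) hgv₀.le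
  have key : ∀ v ∈ G, 0 ≤ β v - r * g v := by
    intro v hv
    rcases le_or_gt (g v) 0 with h | h
    · have : r * g v ≤ 0 := mul_nonpos_of_nonneg_of_nonpos hrge h
      linarith [hβ v hv]
    · have hvF : v ∈ F := Finset.mem_filter.2 ⟨hv, h⟩
      have h1 : r ≤ β v / g v := Finset.inf'_le _ hvF
      have h2 : r * g v ≤ β v := (le_div_iff₀ h).1 h1
      linarith
  have hzero : β v₀ - r * g v₀ = 0 := by
    rw [hr]; field_simp; ring
  refine ⟨v₀, hv₀G, ⟨fun v => β v - r * g v, fun v hv => key v (Finset.mem_of_mem_erase hv), ?_⟩⟩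
  have hsum : ∑ v ∈ G, (β v - r * g v) • v = x := by
    have : ∀ v ∈ G, (β v - r * g v) • v = β v • v - r • (g v • v) := by
      intro v _; rw [sub_smul, smul_smul]
    rw [Finset.sum_congr rfl this, Finset.sum_sub_distrib, ← Finset.smul_sum, hg0, smul_zero,
      sub_zero, hx]
  rw [← hsum]
  rw [Finset.sum_erase _ (by simp only; rw [hzero, zero_smul])]

lemma cone_cara (G : Finset (Fin N → ℝ)) :
    ∀ x ∈ coneF G, ∃ B : Finset (Fin N → ℝ), B ⊆ G ∧
      LinearIndependent ℝ (Subtype.val : ↥(B : Set (Fin N → ℝ)) → (Fin N → ℝ)) ∧ x ∈ coneF B := by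
  classical
  induction G using Finset.strongInductionOn with
  | _ G ih =>
    intro x hx
    by_cases hind : LinearIndependent ℝ (Subtype.val : ↥(G : Set (Fin N → ℝ)) → (Fin N → ℝ))
    · exact ⟨G, le_refl _, hind, hx⟩
    · have : ¬ LinearIndependent ℝ (fun i : (G : Set (Fin N → ℝ)) => (i : Fin N → ℝ)) := hind
      rw [Fintype.not_linearIndependent_iff] at this
      obtain ⟨γ, hγ0, i₀, hi₀⟩ := this
      set g : (Fin N → ℝ) → ℝ := fun v => if hv : v ∈ G then γ ⟨v, hv⟩ else 0 with hg
      have hgsum : ∑ v ∈ G, g v • v = 0 := by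
        rw [← hγ0, ← Finset.sum_coe_sort G (fun v => g v • v)]
        exact Finset.sum_congr rfl fun i _ => by simp [hg, i.2]
      obtain ⟨β, hβ, hxsum⟩ := hx
      have main : ∀ g' : (Fin N → ℝ) → ℝ, (∑ v ∈ G, g' v • v = 0) → (∃ v ∈ G, 0 < g' v) →
          ∃ B, B ⊆ G ∧ LinearIndependent ℝ (Subtype.val : ↥(B : Set (Fin N → ℝ)) → (Fin N → ℝ))
            ∧ x ∈ coneF B := by
        intro g' hsum hpos
        obtain ⟨v₀, hv₀, hx'⟩ := cone_drop hβ hxsum hsum hpos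
        obtain ⟨B, hB1, hB2, hB3⟩ := ih (G.erase v₀) (Finset.erase_ssubset hv₀) x hx'
        exact ⟨B, hB1.trans (Finset.erase_subset _ _), hB2, hB3⟩
      rcases lt_trichotomy (γ i₀) 0 with h | h | h
      · refine main (-g) ?_ ⟨i₀, Finset.mem_coe.1 i₀.2, ?_⟩
        · rw [← neg_zero, ← hgsum, ← Finset.sum_neg_distrib]
          exact Finset.sum_congr rfl fun v _ => by rw [Pi.neg_apply, neg_smul]
        · simp only [Pi.neg_apply, hg]
          rw [dif_pos (Finset.mem_coe.1 i₀.2)]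
          simpa using h
      · exact absurd h hi₀
      · refine main g ?_ ⟨i₀, Finset.mem_coe.1 i₀.2, ?_⟩
        · exact hgsum
        · simp only [hg]; rw [dif_pos (Finset.mem_coe.1 i₀.2)]; simpa using h

lemma coneF_eq_scale (G : Finset (Fin N → ℝ)) (hG : G.Nonempty) :
    coneF G = {x | ∃ t : ℝ, 0 ≤ t ∧ ∃ p ∈ convexHull ℝ (G : Set (Fin N → ℝ)), x = t • p} := by
  classical
  ext x
  constructor
  · rintro ⟨β, hβ, rfl⟩
    set t := ∑ v ∈ G, β v with ht
    have htpos : 0 ≤ t := Finset.sum_nonneg hβ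
    rcases eq_or_lt_of_le htpos with h | h
    · refine ⟨0, le_refl _, hG.choose, subset_convexHull ℝ _ hG.choose_spec, ?_⟩
      have hz : ∀ v ∈ G, β v = 0 := by
        intro v hv
        exact le_antisymm (by
          calc β v ≤ ∑ v ∈ G, β v := Finset.single_le_sum hβ hv
          _ = 0 := h.symm) (hβ v hv)
      rw [Finset.sum_congr rfl fun v hv => by rw [hz v hv, zero_smul]]
      simp
    · refine ⟨t, htpos, ∑ v ∈ G, (β v / t) • v, ?_, ?_⟩
      · rw [Finset.mem_convexHull']
        refine ⟨fun v => β v / t, fun v hv => div_nonneg (hβ v hv) htpos, ?_, rfl⟩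
        rw [← Finset.sum_div, ← ht, div_self h.ne']
      · rw [Finset.smul_sum]
        refine Finset.sum_congr rfl fun v hv => ?_
        rw [smul_smul, mul_div_cancel₀ _ h.ne']
  · rintro ⟨t, ht, p, hp, rfl⟩
    rw [Finset.mem_convexHull'] at hp
    obtain ⟨w, hw0, hw1, rfl⟩ := hp
    refine ⟨fun v => t * w v, fun v hv => mul_nonneg ht (hw0 v hv), ?_⟩
    rw [Finset.smul_sum]
    exact Finset.sum_congr rfl fun v hv => by rw [smul_smul]

lemma isClosed_scale_compact {K : Set (Fin N → ℝ)} (hK : IsCompact K) (h0 : (0 : Fin N → ℝ) ∉ K) :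
    IsClosed {x | ∃ t : ℝ, 0 ≤ t ∧ ∃ p ∈ K, x = t • p} := by
  have hKne : ∀ p ∈ K, ‖p‖ ≠ 0 := fun p hp h => h0 (by rwa [norm_eq_zero.1 h] at hp)
  apply IsSeqClosed.isClosed
  intro u x hu hx
  choose t htge p hpK hup using hu
  obtain ⟨q, hqK, φ, hφ, hq⟩ := hK.tendsto_subseq hpK
  have htval : ∀ n, t n = ‖u n‖ / ‖p n‖ := by
    intro n
    rw [hup n, norm_smul, Real.norm_of_nonneg (htge n), mul_div_assoc,
      div_self (hKne _ (hpK n)), mul_one]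
  have hqn : ‖q‖ ≠ 0 := hKne q hqK
  have hxlim : Tendsto (fun k => u (φ k)) atTop (𝓝 x) := hx.comp hφ.tendsto_atTop
  have htlim : Tendsto (fun k => t (φ k)) atTop (𝓝 (‖x‖ / ‖q‖)) := by
    simp only [htval]
    exact (hxlim.norm.div hq.norm hqn)
  have hlim2 : Tendsto (fun k => t (φ k) • p (φ k)) atTop (𝓝 ((‖x‖ / ‖q‖) • q)) :=
    htlim.smul hq
  have : x = (‖x‖ / ‖q‖) • q := by
    refine tendsto_nhds_unique ?_ hlim2
    simpa only [← hup] using hxlim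
  exact ⟨‖x‖ / ‖q‖, div_nonneg (norm_nonneg _) (norm_nonneg _), q, hqK, this⟩

lemma indep_zero_not_mem_convexHull {B : Finset (Fin N → ℝ)}
    (hB : LinearIndependent ℝ (Subtype.val : ↥(B : Set (Fin N → ℝ)) → (Fin N → ℝ))) :
    (0 : Fin N → ℝ) ∉ convexHull ℝ (B : Set (Fin N → ℝ)) := by
  classical
  intro h0
  rw [Finset.mem_convexHull'] at h0
  obtain ⟨w, hw0, hw1, hwsum⟩ := h0
  have := Fintype.linearIndependent_iff.1 hB (fun i => w i) ?_
  · have : ∀ v ∈ B, w v = 0 := fun v hv => this ⟨v, Finset.mem_coe.2 hv⟩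
    rw [Finset.sum_congr rfl this] at hw1
    simp at hw1
  · rw [← hwsum, ← Finset.sum_coe_sort B (fun v => w v • v)]
    rfl

lemma coneF_empty : (coneF (∅ : Finset (Fin N → ℝ))) = {0} := by
  ext x; simp [coneF, eq_comm]

lemma isClosed_coneF_indep {B : Finset (Fin N → ℝ)}
    (hB : LinearIndependent ℝ (Subtype.val : ↥(B : Set (Fin N → ℝ)) → (Fin N → ℝ))) :
    IsClosed (coneF B) := by
  rcases B.eq_empty_or_nonempty with rfl | hne
  · rw [coneF_empty]; exact isClosed_singleton
  · rw [coneF_eq_scale B hne]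
    exact isClosed_scale_compact ((B.finite_toSet).isCompact_convexHull ℝ)
      (indep_zero_not_mem_convexHull hB)

lemma isClosed_coneF (G : Finset (Fin N → ℝ)) : IsClosed (coneF G) := by
  classical
  have : coneF G = ⋃ B ∈ {B ∈ G.powerset |
      LinearIndependent ℝ (Subtype.val : ↥((B : Finset (Fin N → ℝ)) : Set (Fin N → ℝ)) → (Fin N → ℝ))}, coneF B := by
    ext x
    simp only [Set.mem_iUnion, exists_prop, Finset.mem_filter, Finset.mem_powerset]
    constructor
    · intro hx
      obtain ⟨B, h1, h2, h3⟩ := cone_cara G x hx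
      exact ⟨B, ⟨h1, h2⟩, h3⟩
    · rintro ⟨B, ⟨h1, _⟩, h3⟩
      exact coneF_mono h1 h3
  rw [this]
  apply Set.Finite.isClosed_biUnion
  · exact (Finset.filter _ _).finite_toSet
  · rintro B hB
    exact isClosed_coneF_indep (Finset.mem_filter.1 hB).2

open Metric in
lemma coneF_bounded_repr (G : Finset (Fin N → ℝ)) :
    ∃ C : ℝ, 0 < C ∧ ∀ x ∈ coneF G, ∃ β : (Fin N → ℝ) → ℝ, (∀ v ∈ G, 0 ≤ β v) ∧
      x = ∑ v ∈ G, β v • v ∧ ∑ v ∈ G, β v ≤ C * ‖x‖ := by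
  classical
  set pred : Finset (Fin N → ℝ) → Prop := fun B =>
    B.Nonempty ∧ LinearIndependent ℝ (Subtype.val : ↥(B : Set (Fin N → ℝ)) → (Fin N → ℝ))
  have hkey : ∀ B : Finset (Fin N → ℝ), pred B →
      0 < infDist 0 (convexHull ℝ (B : Set (Fin N → ℝ))) := by
    rintro B ⟨hne, hind⟩
    rw [← (((B.finite_toSet).isClosed_convexHull ℝ).notMem_iff_infDist_pos
      ((convexHull_nonempty_iff).2 (by exact_mod_cast hne)))]
    exact indep_zero_not_mem_convexHull hind
  set C : ℝ := 1 + ∑ B ∈ G.powerset, (if h : pred B then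
      (infDist 0 (convexHull ℝ (B : Set (Fin N → ℝ))))⁻¹ else 0) with hC
  have hterm : ∀ B ∈ G.powerset, 0 ≤ (if h : pred B then
      (infDist 0 (convexHull ℝ (B : Set (Fin N → ℝ))))⁻¹ else 0) := by
    intro B _
    split
    · exact inv_nonneg.2 (hkey B ‹_›).le
    · exact le_refl _
  have hCpos : 0 < C := by
    have := Finset.sum_nonneg hterm
    rw [hC]; linarith
  refine ⟨C, hCpos, ?_⟩
  intro x hx
  obtain ⟨B, hBG, hind, hxB⟩ := cone_cara G x hx
  rcases B.eq_empty_or_nonempty with rfl | hBne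
  · obtain ⟨β, _, hxx⟩ := hxB
    simp only [Finset.sum_empty] at hxx
    exact ⟨0, fun v _ => le_refl _, by simp [hxx], by
      simp [hxx]⟩
  · rw [coneF_eq_scale B hBne] at hxB
    obtain ⟨t, ht, p, hp, rfl⟩ := hxB
    rcases eq_or_lt_of_le ht with rfl | htpos
    · exact ⟨0, fun v _ => le_refl _, by simp, by simp⟩
    obtain ⟨w, hw0, hw1, hwp⟩ := Finset.mem_convexHull'.1 hp
    set δ := infDist 0 (convexHull ℝ (B : Set (Fin N → ℝ))) with hδ
    have hδpos : 0 < δ := hkey B ⟨hBne, hind⟩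
    have hpn : δ ≤ ‖p‖ := by
      have := infDist_le_dist_of_mem hp (x := (0 : Fin N → ℝ))
      rwa [dist_zero_left] at this
    have htle : t ≤ C * ‖t • p‖ := by
      have h1 : ‖t • p‖ = t * ‖p‖ := by rw [norm_smul, Real.norm_of_nonneg ht]
      have hδinvC : δ⁻¹ ≤ C := by
        have hmem : B ∈ G.powerset := Finset.mem_powerset.2 hBG
        have := Finset.single_le_sum hterm hmem
        rw [dif_pos (⟨hBne, hind⟩ : pred B)] at this
        rw [hC]; linarith
      have h2 : t ≤ δ⁻¹ * ‖t • p‖ := by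
        rw [h1, ← mul_assoc]
        calc t = t * 1 := (mul_one t).symm
        _ ≤ (δ⁻¹ * t) * ‖p‖ := by
            rw [mul_comm δ⁻¹ t, mul_assoc]
            apply mul_le_mul_of_nonneg_left _ ht
            rw [← div_eq_inv_mul]
            rw [le_div_iff₀ hδpos, one_mul]
            exact hpn
        _ = δ⁻¹ * t * ‖p‖ := rfl
      calc t ≤ δ⁻¹ * ‖t • p‖ := h2
      _ ≤ C * ‖t • p‖ := mul_le_mul_of_nonneg_right hδinvC (norm_nonneg _)
    refine ⟨fun v => if v ∈ B then t * w v else 0, fun v _ => ?_, ?_, ?_⟩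
    · simp only; split
      · exact mul_nonneg ht (hw0 _ ‹_›)
      · exact le_refl _
    · rw [← Finset.sum_subset hBG (fun v _ hv => by simp [hv])]
      rw [Finset.sum_congr rfl (show ∀ v ∈ B, (fun v => if v ∈ B then t * w v else 0) v • v
        = (t * w v) • v from fun v hv => by simp [hv]), ← hwp, Finset.smul_sum]
      exact Finset.sum_congr rfl fun v hv => (smul_smul _ _ _)
    · rw [← Finset.sum_subset hBG (fun v _ hv => by simp [hv])]
      rw [Finset.sum_congr rfl (show ∀ v ∈ B, (fun v => if v ∈ B then t * w v else 0) v
        = t * w v from fun v hv => by simp [hv]), ← Finset.mul_sum, hw1, mul_one]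
      exact htle

/-- Reverse local inclusion: if `Sg + w` is in the cone, `w` is in the local cone at `Sg`. -/
lemma mem_local_cone {G : Finset (Fin N → ℝ)} {Sg x : Fin N → ℝ} (hx : x ∈ coneF G) :
    x - Sg ∈ coneF (insert (-Sg) G) := by
  have h1 : x ∈ coneF (insert (-Sg) G) := coneF_mono (Finset.subset_insert _ _) hx
  have h2 : -Sg ∈ coneF (insert (-Sg) G) := mem_coneF_self (Finset.mem_insert_self _ _)
  have := coneF_add h1 h2
  rwa [← sub_eq_add_neg] at this

/-- Local structure of a finitely generated cone: near a point `Sg` of the cone,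
membership in the cone is implied by membership of the displacement in the local cone. -/
lemma local_structure {G : Finset (Fin N → ℝ)} {Sg : Fin N → ℝ} (hSg : Sg ∈ coneF G) :
    ∃ ε : ℝ, 0 < ε ∧ ∀ w : Fin N → ℝ, ‖w‖ < ε → w ∈ coneF (insert (-Sg) G) →
      Sg + w ∈ coneF G := by
  classical
  obtain ⟨C, hCpos, hC⟩ := coneF_bounded_repr (insert (-Sg) G)
  refine ⟨C⁻¹, inv_pos.2 hCpos, ?_⟩
  intro w hw hwmem
  obtain ⟨β, hβ0, hβsum, hβle⟩ := hC w hwmem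
  have hβtot : ∑ v ∈ insert (-Sg) G, β v < 1 := by
    calc ∑ v ∈ insert (-Sg) G, β v ≤ C * ‖w‖ := hβle
    _ < C * C⁻¹ := by
        apply mul_lt_mul_of_pos_left hw hCpos
    _ = 1 := mul_inv_cancel₀ hCpos.ne'
  set β₀ := β (-Sg) with hβ₀
  have hβ₀mem : 0 ≤ β₀ := hβ0 _ (Finset.mem_insert_self _ _)
  have hβ₀lt : β₀ < 1 := by
    have : β₀ ≤ ∑ v ∈ insert (-Sg) G, β v :=
      Finset.single_le_sum hβ0 (Finset.mem_insert_self _ _)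
    linarith
  -- w = β₀ • (-Sg) + rest, rest ∈ coneF ((insert (-Sg) G).erase (-Sg)) ⊆ coneF G
  have hsplit : w = β₀ • (-Sg) + ∑ v ∈ (insert (-Sg) G).erase (-Sg), β v • v := by
    rw [hβsum, ← Finset.add_sum_erase _ _ (Finset.mem_insert_self (-Sg) G)]
  have hrest : ∑ v ∈ (insert (-Sg) G).erase (-Sg), β v • v ∈ coneF G := by
    apply coneF_mono (Finset.erase_insert_subset _ _)
    exact ⟨β, fun v hv => hβ0 v (Finset.mem_of_mem_erase hv), rfl⟩
  have : Sg + w = (1 - β₀) • Sg + ∑ v ∈ (insert (-Sg) G).erase (-Sg), β v • v := by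
    rw [hsplit, sub_smul, one_smul, smul_neg]
    abel
  rw [this]
  exact coneF_add (coneF_smul (by linarith) hSg) hrest

/-- Lemma 2.7, first claim. Let `P ⊆ ℝ^N` be a polytope not containing the origin and
`D = ℝ₊ · P`.  Let `Sig ∈ D \ {0}`, let `Sm` be a sequence of distinct points converging
to `Sig`, let `S ≠ 0`, let `c m ≥ 0` be a bounded sequence, and `Γ m = Sm m - c m • S`.
If the open segment `(Sig, Γ m)` meets `D` for every `m`, then for infinitely many `m`
there exists a point of the closed segment `[Sm m, Γ m]` lying in `D`. -/
theorem segment_meets_cone_infinitely_often {N : ℕ}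
    (s : Finset (Fin N → ℝ)) (P : Set (Fin N → ℝ))
    (hP : P = convexHull ℝ (s : Set (Fin N → ℝ))) (h0 : (0 : Fin N → ℝ) ∉ P)
    (D : Set (Fin N → ℝ)) (hD : D = {x | ∃ t : ℝ, 0 ≤ t ∧ ∃ p ∈ P, x = t • p})
    (Sig : Fin N → ℝ) (hSig : Sig ∈ D) (hSig0 : Sig ≠ 0)
    (Sm : ℕ → Fin N → ℝ) (hinj : Function.Injective Sm)
    (hlim : Tendsto Sm atTop (𝓝 Sig))
    (S : Fin N → ℝ) (hS : S ≠ 0)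
    (c : ℕ → ℝ) (hc : ∀ m, 0 ≤ c m) (hbd : ∃ M, ∀ m, c m ≤ M)
    (Γ : ℕ → Fin N → ℝ) (hΓ : ∀ m, Γ m = Sm m - c m • S)
    (hmeet : ∀ m, (openSegment ℝ Sig (Γ m) ∩ D).Nonempty) :
    {m : ℕ | (segment ℝ (Sm m) (Γ m) ∩ D).Nonempty}.Infinite := by
  classical
  -- `s` is nonempty
  have hsne : s.Nonempty := by
    rcases s.eq_empty_or_nonempty with rfl | h
    · exfalso
      rw [hD, hP] at hSig
      simp at hSig
    · exact h
  have hDcone : D = coneF s := by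
    rw [hD, hP, coneF_eq_scale s hsne]
  have hSig' : Sig ∈ coneF s := hDcone ▸ hSig
  obtain ⟨ε, hεpos, hloc⟩ := local_structure hSig'
  set T : Set (Fin N → ℝ) := coneF (insert (-Sig) s) with hT
  -- each `Γ m - Sig` lies in the local cone `T`
  have hΓT : ∀ m, Γ m - Sig ∈ T := by
    intro m
    obtain ⟨x, hxseg, hxD⟩ := hmeet m
    obtain ⟨a, b, ha, hb, hab, hx⟩ := hxseg
    have hxT : x - Sig ∈ T := mem_local_cone (hDcone ▸ hxD)
    have hxb : x - Sig = b • (Γ m - Sig) := by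
      have haeq : a = 1 - b := by linarith
      rw [← hx, haeq]
      module
    have := coneF_smul (inv_nonneg.2 hb.le) hxT
    rwa [hxb, smul_smul, inv_mul_cancel₀ hb.ne', one_smul] at this
  -- the entry-time sets
  set A : ℕ → Set ℝ := fun m => {u : ℝ | u ∈ Set.Icc 0 (c m) ∧ (Sm m - Sig) - u • S ∈ T}
    with hA
  have hAne : ∀ m, c m ∈ A m := by
    intro m
    refine ⟨⟨hc m, le_refl _⟩, ?_⟩
    have : (Sm m - Sig) - c m • S = Γ m - Sig := by rw [hΓ m]; abel
    rw [this]; exact hΓT m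
  have hAbdd : ∀ m, BddBelow (A m) := fun m => ⟨0, fun u hu => hu.1.1⟩
  have hAclosed : ∀ m, IsClosed (A m) := by
    intro m
    refine IsClosed.inter isClosed_Icc ?_
    exact (isClosed_coneF _).preimage (continuous_const.sub (continuous_id.smul continuous_const))
  set u₀ : ℕ → ℝ := fun m => sInf (A m) with hu₀
  have hu₀mem : ∀ m, u₀ m ∈ A m := fun m => (hAclosed m).csInf_mem ⟨_, hAne m⟩ (hAbdd m)
  have hu₀min : ∀ m, ∀ u ∈ A m, u₀ m ≤ u := fun m u hu => csInf_le (hAbdd m) hu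
  obtain ⟨M, hM⟩ := hbd
  -- Bolzano–Weierstrass for `u₀`
  have hu₀Icc : ∀ m, u₀ m ∈ Set.Icc (0 : ℝ) (max M 0) := by
    intro m
    exact ⟨(hu₀mem m).1.1, le_trans ((hu₀mem m).1.2) (le_trans (hM m) (le_max_left _ _))⟩
  obtain ⟨ustar, hustarIcc, φ, hφ, hulim⟩ := (isCompact_Icc (a := (0:ℝ))
    (b := max M 0)).tendsto_subseq hu₀Icc
  set p : ℕ → (Fin N → ℝ) := fun m => (Sm m - Sig) - (u₀ m) • S with hp
  have hpT : ∀ m, p m ∈ T := fun m => (hu₀mem m).2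
  have hplim : Tendsto (fun k => p (φ k)) atTop (𝓝 (-(ustar • S))) := by
    have h1 : Tendsto (fun k => Sm (φ k) - Sig) atTop (𝓝 (Sig - Sig)) :=
      (hlim.comp hφ.tendsto_atTop).sub tendsto_const_nhds
    have h2 : Tendsto (fun k => (u₀ (φ k)) • S) atTop (𝓝 (ustar • S)) :=
      hulim.smul_const S
    have := h1.sub h2
    simpa using this
  -- the limit `ustar` must be zero
  have hustar0 : ustar = 0 := by
    by_contra hne
    have hus : 0 < ustar := lt_of_le_of_ne hustarIcc.1 (Ne.symm hne)
    set Pstar : Fin N → ℝ := -(ustar • S) with hPstar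
    have hPstarT : Pstar ∈ T :=
      (isClosed_coneF _).mem_of_tendsto hplim (Filter.Eventually.of_forall fun k => hpT (φ k))
    obtain ⟨ε₂, hε₂pos, hloc2⟩ := local_structure hPstarT
    have hSmem : S ∈ coneF (insert (-Pstar) (insert (-Sig) s)) := by
      have h1 : -Pstar ∈ coneF (insert (-Pstar) (insert (-Sig) s)) :=
        mem_coneF_self (Finset.mem_insert_self _ _)
      have h2 := coneF_smul (inv_nonneg.2 hus.le) h1
      have h3 : ustar⁻¹ • -Pstar = S := by
        rw [hPstar, neg_neg, smul_smul, inv_mul_cancel₀ hus.ne', one_smul]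
      rwa [h3] at h2
    -- pick a far index
    have hev : ∀ᶠ k in atTop, (ustar / 2 < u₀ (φ k)) ∧ ‖p (φ k) - Pstar‖ < ε₂ / 2 := by
      have e1 : ∀ᶠ k in atTop, ustar / 2 < u₀ (φ k) :=
        hulim.eventually (eventually_gt_nhds (by linarith))
      have e2 : ∀ᶠ k in atTop, ‖p (φ k) - Pstar‖ < ε₂ / 2 := by
        have : Tendsto (fun k => ‖p (φ k) - Pstar‖) atTop (𝓝 0) := by
          have := (hplim.sub (tendsto_const_nhds (x := Pstar))).norm
          simpa using this
        exact this.eventually (eventually_lt_nhds (by linarith))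
      exact e1.and e2
    obtain ⟨k, hk1, hk2⟩ := hev.exists
    set m' := φ k with hm'
    set η : ℝ := min (ustar / 2) (ε₂ / (2 * (‖S‖ + 1))) with hη
    have hηpos : 0 < η := lt_min (by linarith) (by positivity)
    have hηle : η ≤ ustar / 2 := min_le_left _ _
    have hηS : η * ‖S‖ ≤ ε₂ / 2 := by
      have h1 : η ≤ ε₂ / (2 * (‖S‖ + 1)) := min_le_right _ _
      have h2 : η * ‖S‖ ≤ (ε₂ / (2 * (‖S‖ + 1))) * ‖S‖ :=
        mul_le_mul_of_nonneg_right h1 (norm_nonneg _)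
      have h3 : (ε₂ / (2 * (‖S‖ + 1))) * ‖S‖ ≤ ε₂ / 2 := by
        rw [div_mul_eq_mul_div, div_le_div_iff₀ (by positivity) (by norm_num)]
        nlinarith [norm_nonneg S]
      linarith
    have hd : p m' - Pstar ∈ coneF (insert (-Pstar) (insert (-Sig) s)) :=
      mem_local_cone (hpT m')
    have hw : (p m' - Pstar) + η • S ∈ coneF (insert (-Pstar) (insert (-Sig) s)) :=
      coneF_add hd (coneF_smul hηpos.le hSmem)
    have hwnorm : ‖(p m' - Pstar) + η • S‖ < ε₂ := by
      calc ‖(p m' - Pstar) + η • S‖ ≤ ‖p m' - Pstar‖ + ‖η • S‖ := norm_add_le _ _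
      _ = ‖p m' - Pstar‖ + η * ‖S‖ := by rw [norm_smul, Real.norm_of_nonneg hηpos.le]
      _ < ε₂ / 2 + ε₂ / 2 := by
          apply add_lt_add_of_lt_of_le hk2 hηS
      _ = ε₂ := by ring
    have hinT : Pstar + ((p m' - Pstar) + η • S) ∈ T := hloc2 _ hwnorm hw
    have heq : Pstar + ((p m' - Pstar) + η • S) = (Sm m' - Sig) - (u₀ m' - η) • S := by
      rw [hp]
      simp only
      rw [sub_smul]
      abel
    have hmemA : u₀ m' - η ∈ A m' := by
      constructor
      · constructor
        · have : η ≤ u₀ m' := le_trans hηle hk1.le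
          linarith
        · have : u₀ m' ≤ c m' := (hu₀mem m').1.2
          linarith
      · rw [← heq]; exact hinT
    have := hu₀min m' _ hmemA
    linarith
  -- conclusion: infinitely many good indices
  apply Set.infinite_of_forall_exists_gt
  intro a
  have hev : ∀ᶠ k in atTop, ‖p (φ k)‖ < ε ∧ a < φ k := by
    have e1 : ∀ᶠ k in atTop, ‖p (φ k)‖ < ε := by
      have : Tendsto (fun k => ‖p (φ k)‖) atTop (𝓝 0) := by
        have := hplim.norm
        rw [hustar0] at this
        simpa using this
      exact this.eventually (eventually_lt_nhds hεpos)
    have e2 : ∀ᶠ k in atTop, a < φ k :=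
      hφ.tendsto_atTop.eventually (eventually_gt_atTop a)
    exact e1.and e2
  obtain ⟨k, hk1, hk2⟩ := hev.exists
  set m' := φ k with hm'
  have hqD : Sig + p m' ∈ D := by
    rw [hDcone]
    exact hloc _ hk1 (hpT m')
  have hqeq : Sig + p m' = Sm m' - u₀ m' • S := by rw [hp]; simp only; abel
  have hqseg : Sig + p m' ∈ segment ℝ (Sm m') (Γ m') := by
    rcases eq_or_lt_of_le (hc m') with hc0 | hcpos
    · have hu0 : u₀ m' = 0 := le_antisymm (((hu₀mem m').1.2).trans hc0.ge) (hu₀mem m').1.1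
      rw [hqeq, hu0, zero_smul, sub_zero]
      exact left_mem_segment ℝ _ _
    · refine ⟨1 - u₀ m' / c m', u₀ m' / c m', ?_, ?_, by ring, ?_⟩
      · have h1 : u₀ m' / c m' ≤ 1 := by
          rw [div_le_one hcpos]
          exact (hu₀mem m').1.2
        linarith
      · exact div_nonneg (hu₀mem m').1.1 hcpos.le
      · rw [hqeq, hΓ m']
        rw [smul_sub, sub_smul, one_smul, smul_smul, div_mul_cancel₀ _ hcpos.ne']
        abel
  exact ⟨m', ⟨Sig + p m', hqseg, hqD⟩, hk2⟩
end

section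
/- Let P ⊆ R^N be a polytope not containing the origin and D = R_+ · P. Let Σ ∈ D \ {0}, let Σ_m be a sequence of distinct points converging to Σ, let S ∈ R^N \ {0}, let c_m ≥ 0 be a bounded sequence, and set Γ_m = Σ_m − c_m S. Assume that for every m: the open segment (Σ, Γ_m) meets D, Γ_m ∈ D, and the open segment (Σ_m, Γ_m) does not meet D. Then c_m → 0, i.e., Γ_m converges to Σ. -/
open Set Filter Topology


/-- Fourier–Motzkin elimination of one ray. -/
lemma fm_step {N : ℕ} (L : Finset ((Fin N → ℝ) →ₗ[ℝ] ℝ)) (v : Fin N → ℝ) :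
    ∃ L' : Finset ((Fin N → ℝ) →ₗ[ℝ] ℝ), ∀ x,
      (∃ t : ℝ, 0 ≤ t ∧ ∀ ℓ ∈ L, 0 ≤ ℓ x - t * ℓ v) ↔ (∀ ℓ ∈ L', 0 ≤ ℓ x) := by
  classical
  set Lpos := L.filter (fun ℓ => 0 < ℓ v) with hLpos
  set Lneg := L.filter (fun ℓ => ℓ v < 0) with hLneg
  set Lzero := L.filter (fun ℓ => ℓ v = 0) with hLzero
  refine ⟨Lzero ∪ Lpos ∪ (Lneg ×ˢ Lpos).image
      (fun p => (p.2 v) • p.1 - (p.1 v) • p.2), fun x => ?_⟩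
  constructor
  · rintro ⟨t, ht, h⟩ ℓ hℓ
    simp only [Finset.mem_union, Finset.mem_image, Finset.mem_product] at hℓ
    rcases hℓ with (hℓ | hℓ) | ⟨⟨ℓ₁, ℓ₂⟩, ⟨h1, h2⟩, rfl⟩
    · rw [hLzero, Finset.mem_filter] at hℓ
      have := h ℓ hℓ.1
      nlinarith [hℓ.2]
    · rw [hLpos, Finset.mem_filter] at hℓ
      have := h ℓ hℓ.1
      nlinarith [hℓ.2]
    · rw [hLneg, Finset.mem_filter] at h1
      rw [hLpos, Finset.mem_filter] at h2
      have hA := h ℓ₁ h1.1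
      have hB := h ℓ₂ h2.1
      simp only [LinearMap.sub_apply, LinearMap.smul_apply, smul_eq_mul]
      nlinarith [h1.2, h2.2]
  · intro hx
    by_cases hp : Lpos.Nonempty
    · refine ⟨Lpos.inf' hp (fun ℓ => ℓ x / ℓ v), ?_, ?_⟩
      · apply Finset.le_inf'
        intro ℓ hℓ
        have hv : 0 < ℓ v := (Finset.mem_filter.1 hℓ).2
        have hxℓ : 0 ≤ ℓ x := hx ℓ (by simp [Finset.mem_union, hℓ])
        positivity
      · intro ℓ hℓ
        rcases lt_trichotomy (ℓ v) 0 with hv | hv | hv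
        · obtain ⟨ℓ₀, hℓ₀, he⟩ := Finset.exists_mem_eq_inf' hp (fun ℓ => ℓ x / ℓ v)
          rw [he]
          have hv₀ : 0 < ℓ₀ v := (Finset.mem_filter.1 hℓ₀).2
          have hg : 0 ≤ ((ℓ₀ v) • ℓ - (ℓ v) • ℓ₀) x := by
            apply hx
            simp only [Finset.mem_union, Finset.mem_image, Finset.mem_product]
            exact Or.inr ⟨(ℓ, ℓ₀), ⟨Finset.mem_filter.2 ⟨hℓ, hv⟩, hℓ₀⟩, rfl⟩
          simp only [LinearMap.sub_apply, LinearMap.smul_apply, smul_eq_mul] at hg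
          rw [div_mul_eq_mul_div, sub_nonneg, div_le_iff₀ hv₀]
          nlinarith
        · have : ℓ ∈ Lzero := Finset.mem_filter.2 ⟨hℓ, hv⟩
          have := hx ℓ (by simp [Finset.mem_union, this])
          simp [hv]
          linarith
        · have hmem : ℓ ∈ Lpos := Finset.mem_filter.2 ⟨hℓ, hv⟩
          have hle := Finset.inf'_le (fun ℓ => ℓ x / ℓ v) hmem
          rw [sub_nonneg]
          calc Lpos.inf' hp (fun ℓ => ℓ x / ℓ v) * ℓ v ≤ (ℓ x / ℓ v) * ℓ v := by
                exact mul_le_mul_of_nonneg_right hle hv.le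
            _ = ℓ x := div_mul_cancel₀ _ hv.ne'
    · -- no positive constraints
      by_cases hn : Lneg.Nonempty
      · refine ⟨max 0 (Lneg.sup' hn (fun ℓ => ℓ x / ℓ v)), le_max_left _ _, ?_⟩
        intro ℓ hℓ
        rcases lt_trichotomy (ℓ v) 0 with hv | hv | hv
        · have hmem : ℓ ∈ Lneg := Finset.mem_filter.2 ⟨hℓ, hv⟩
          have hle := Finset.le_sup' (fun ℓ => ℓ x / ℓ v) hmem
          have h2 : ℓ x / ℓ v ≤ max 0 (Lneg.sup' hn (fun ℓ => ℓ x / ℓ v)) :=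
            le_trans hle (le_max_right _ _)
          rw [sub_nonneg]
          calc max 0 (Lneg.sup' hn (fun ℓ => ℓ x / ℓ v)) * ℓ v
              ≤ (ℓ x / ℓ v) * ℓ v := by
                exact mul_le_mul_of_nonpos_right h2 hv.le
            _ = ℓ x := div_mul_cancel₀ _ hv.ne
        · have : ℓ ∈ Lzero := Finset.mem_filter.2 ⟨hℓ, hv⟩
          have := hx ℓ (by simp [Finset.mem_union, this])
          simp [hv]
          linarith
        · exact absurd ⟨ℓ, Finset.mem_filter.2 ⟨hℓ, hv⟩⟩ hp
      · refine ⟨0, le_refl 0, fun ℓ hℓ => ?_⟩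
        rcases lt_trichotomy (ℓ v) 0 with hv | hv | hv
        · exact absurd ⟨ℓ, Finset.mem_filter.2 ⟨hℓ, hv⟩⟩ hn
        · have : ℓ ∈ Lzero := Finset.mem_filter.2 ⟨hℓ, hv⟩
          have := hx ℓ (by simp [Finset.mem_union, this])
          linarith
        · exact absurd ⟨ℓ, Finset.mem_filter.2 ⟨hℓ, hv⟩⟩ hp


/-- Weyl: a finitely generated cone is a finite intersection of halfspaces. -/
lemma cone_polyhedral {N : ℕ} (s : Finset (Fin N → ℝ)) :
    ∃ L : Finset ((Fin N → ℝ) →ₗ[ℝ] ℝ), ∀ x,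
      (∃ cf : (Fin N → ℝ) → ℝ, (∀ w, 0 ≤ cf w) ∧ x = ∑ w ∈ s, cf w • w) ↔
      (∀ ℓ ∈ L, 0 ≤ ℓ x) := by
  classical
  induction s using Finset.induction_on with
  | empty =>
    refine ⟨(Finset.univ.image (fun i : Fin N => (LinearMap.proj i : (Fin N → ℝ) →ₗ[ℝ] ℝ))) ∪
      (Finset.univ.image (fun i : Fin N => -(LinearMap.proj i : (Fin N → ℝ) →ₗ[ℝ] ℝ))), fun x => ?_⟩
    constructor
    · rintro ⟨cf, -, rfl⟩ ℓ hℓ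
      simp
    · intro hx
      refine ⟨fun _ => 0, fun _ => le_refl 0, ?_⟩
      funext i
      have h1 := hx (LinearMap.proj i) (by simp)
      have h2 := hx (-(LinearMap.proj i : (Fin N → ℝ) →ₗ[ℝ] ℝ))
        (by simp)
      simp only [LinearMap.proj_apply, LinearMap.neg_apply] at h1 h2
      simp only [Finset.sum_empty]
      change _ = (0:ℝ)
      linarith
  | @insert a s ha ih =>
    obtain ⟨L, hL⟩ := ih
    obtain ⟨L', hL'⟩ := fm_step L a
    refine ⟨L', fun x => ?_⟩
    rw [← hL' x]
    constructor
    · rintro ⟨cf, hcf, rfl⟩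
      refine ⟨cf a, hcf a, fun ℓ hℓ => ?_⟩
      have : (∑ w ∈ insert a s, cf w • w) - cf a • a = ∑ w ∈ s, cf w • w := by
        rw [Finset.sum_insert ha]; abel
      have hmem : (∑ w ∈ insert a s, cf w • w) - cf a • a ∈
          {y | ∃ cf : (Fin N → ℝ) → ℝ, (∀ w, 0 ≤ cf w) ∧ y = ∑ w ∈ s, cf w • w} :=
        ⟨cf, hcf, this⟩
      have := (hL _).1 hmem ℓ hℓ
      simpa [map_sub, map_smul, smul_eq_mul, sub_nonneg] using this
    · rintro ⟨t, ht, hts⟩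
      have hmem : ∀ ℓ ∈ L, 0 ≤ ℓ (x - t • a) := by
        intro ℓ hℓ
        have := hts ℓ hℓ
        simpa [map_sub, map_smul, smul_eq_mul] using this
      obtain ⟨cf, hcf, hsum⟩ := (hL _).2 hmem
      refine ⟨Function.update cf a t, ?_, ?_⟩
      · intro w
        rcases eq_or_ne w a with rfl | hw
        · simpa using ht
        · simpa [Function.update_of_ne hw] using hcf w
      · rw [Finset.sum_insert ha, Function.update_self]
        have : ∑ w ∈ s, Function.update cf a t w • w = ∑ w ∈ s, cf w • w := by
          apply Finset.sum_congr rfl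
          intro w hw
          rw [Function.update_of_ne (by rintro rfl; exact ha hw)]
        rw [this, ← hsum]
        abel

/-- Lemma 2.7, second claim. Let `P ⊆ ℝ^N` be a polytope not containing the origin and
`D = ℝ₊ · P`.  Let `Sig ∈ D \ {0}`, let `Sm` be a sequence of distinct points converging
to `Sig`, let `S ≠ 0`, let `c m ≥ 0` be a bounded sequence, and `Γ m = Sm m - c m • S`.
Assume for every `m` that the open segment `(Sig, Γ m)` meets `D`, that `Γ m ∈ D`, and
that the open segment `(Sm m, Γ m)` does not meet `D`.  Then `c m → 0`, i.e. `Γ m`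
converges to `Sig`. -/

theorem gamma_tendsto_sigma {N : ℕ}
    (s : Finset (Fin N → ℝ)) (P : Set (Fin N → ℝ))
    (hP : P = convexHull ℝ (s : Set (Fin N → ℝ))) (h0 : (0 : Fin N → ℝ) ∉ P)
    (D : Set (Fin N → ℝ)) (hD : D = {x | ∃ t : ℝ, 0 ≤ t ∧ ∃ p ∈ P, x = t • p})
    (Sig : Fin N → ℝ) (hSig : Sig ∈ D) (hSig0 : Sig ≠ 0)
    (Sm : ℕ → Fin N → ℝ) (hinj : Function.Injective Sm)
    (hlim : Tendsto Sm atTop (𝓝 Sig))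
    (S : Fin N → ℝ) (hS : S ≠ 0)
    (c : ℕ → ℝ) (hc : ∀ m, 0 ≤ c m) (hbd : ∃ M, ∀ m, c m ≤ M)
    (Γ : ℕ → Fin N → ℝ) (hΓ : ∀ m, Γ m = Sm m - c m • S)
    (hmeet : ∀ m, (openSegment ℝ Sig (Γ m) ∩ D).Nonempty)
    (hΓD : ∀ m, Γ m ∈ D)
    (hnomeet : ∀ m, openSegment ℝ (Sm m) (Γ m) ∩ D = ∅) :
    Tendsto c atTop (𝓝 0) ∧ Tendsto Γ atTop (𝓝 Sig) := by
  classical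
  obtain ⟨L, hL⟩ := cone_polyhedral s
  -- identify D with the finitely generated cone
  have hDK : ∀ x, x ∈ D ↔ ∃ cf : (Fin N → ℝ) → ℝ, (∀ w, 0 ≤ cf w) ∧ x = ∑ w ∈ s, cf w • w := by
    intro x
    constructor
    · rintro hx
      rw [hD] at hx
      obtain ⟨t, ht, p, hp, rfl⟩ := hx
      rw [hP, Finset.mem_convexHull'] at hp
      obtain ⟨w, hw0, hw1, hwp⟩ := hp
      refine ⟨fun v => if v ∈ s then t * w v else 0, ?_, ?_⟩
      · intro v
        by_cases hv : v ∈ s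
        · simp only [if_pos hv]
          exact mul_nonneg ht (hw0 v hv)
        · simp [hv]
      · rw [← hwp, Finset.smul_sum]
        apply Finset.sum_congr rfl
        intro v hv
        simp only [if_pos hv, smul_smul]
    · rintro ⟨cf, hcf, rfl⟩
      rw [hD]
      set T := ∑ w ∈ s, cf w with hT
      rcases eq_or_lt_of_le (Finset.sum_nonneg (fun w _ => hcf w)) with hT0 | hTpos
      · -- all coefficients vanish
        have hzero : ∀ w ∈ s, cf w = 0 := by
          intro w hw
          exact (Finset.sum_eq_zero_iff_of_nonneg (fun v _ => hcf v)).1 hT0.symm w hw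
        have : ∑ w ∈ s, cf w • w = 0 := by
          apply Finset.sum_eq_zero
          intro w hw
          rw [hzero w hw, zero_smul]
        rw [this]
        obtain ⟨t, -, p, hp, -⟩ : ∃ t : ℝ, 0 ≤ t ∧ ∃ p ∈ P, Sig = t • p := by
          rw [hD] at hSig; exact hSig
        exact ⟨0, le_refl 0, p, hp, (zero_smul ℝ p).symm⟩
      · refine ⟨T, hTpos.le, T⁻¹ • ∑ w ∈ s, cf w • w, ?_, (smul_inv_smul₀ hTpos.ne' _).symm⟩
        rw [hP, Finset.mem_convexHull']
        refine ⟨fun v => cf v / T, fun v _ => div_nonneg (hcf v) hTpos.le, ?_, ?_⟩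
        · rw [← Finset.sum_div, ← hT, div_self hTpos.ne']
        · rw [Finset.smul_sum]
          apply Finset.sum_congr rfl
          intro v hv
          simp only [smul_smul, div_eq_inv_mul]
  have hDL : ∀ x, x ∈ D ↔ ∀ ℓ ∈ L, 0 ≤ ℓ x := fun x => (hDK x).trans (hL x)
  have hcont : ∀ ℓ : (Fin N → ℝ) →ₗ[ℝ] ℝ, Continuous ℓ := fun ℓ =>
    ℓ.continuous_of_finiteDimensional
  have hSigL : ∀ ℓ ∈ L, 0 ≤ ℓ Sig := (hDL Sig).1 hSig
  -- main claim : c → 0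
  have hc0 : Tendsto c atTop (𝓝 0) := by
    apply tendsto_of_subseq_tendsto
    intro ns hns
    obtain ⟨M, hM⟩ := hbd
    have hmem : ∀ n, c (ns n) ∈ Icc (0:ℝ) M := fun n => ⟨hc _, hM _⟩
    obtain ⟨c₀, hc₀mem, φ, hφ, hcφ⟩ := (isCompact_Icc).tendsto_subseq hmem
    refine ⟨φ, ?_⟩
    suffices hc₀ : c₀ = 0 by
      rw [hc₀] at hcφ; exact hcφ
    by_contra hne
    have hc₀pos : 0 < c₀ := lt_of_le_of_ne hc₀mem.1 (Ne.symm hne)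
    set ψ := fun n => ns (φ n) with hψ
    have hψtop : Tendsto ψ atTop atTop := hns.comp hφ.tendsto_atTop
    have hSmψ : Tendsto (fun n => Sm (ψ n)) atTop (𝓝 Sig) := hlim.comp hψtop
    have hcψ : Tendsto (fun n => c (ψ n)) atTop (𝓝 c₀) := hcφ
    set y : Fin N → ℝ := Sig - (c₀ / 2) • S with hy
    set ym : ℕ → Fin N → ℝ := fun n => Sm (ψ n) - (c (ψ n) / 2) • S with hym
    have hyten : Tendsto ym atTop (𝓝 y) := hSmψ.sub ((hcψ.div_const 2).smul_const S)
    have hΓten : Tendsto (fun n => Γ (ψ n)) atTop (𝓝 (Sig - c₀ • S)) := by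
      have : (fun n => Γ (ψ n)) = fun n => Sm (ψ n) - c (ψ n) • S := by
        funext n; exact hΓ (ψ n)
      rw [this]
      exact hSmψ.sub (hcψ.smul_const S)
    have hGammaInf : ∀ ℓ ∈ L, 0 ≤ ℓ (Sig - c₀ • S) := by
      intro ℓ hℓ
      refine ge_of_tendsto ((hcont ℓ).continuousAt.tendsto.comp hΓten) ?_
      filter_upwards with n
      exact (hDL _).1 (hΓD (ψ n)) ℓ hℓ
    -- each ym n lies on the open segment, hence outside D
    have hymD : ∀ n, ym n ∉ D := by
      intro n hn
      have hseg : ym n ∈ openSegment ℝ (Sm (ψ n)) (Γ (ψ n)) := by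
        refine ⟨1/2, 1/2, by norm_num, by norm_num, by norm_num, ?_⟩
        rw [hΓ (ψ n)]
        rw [hym]
        simp only [smul_sub, smul_smul]
        module
      have := hnomeet (ψ n)
      rw [Set.eq_empty_iff_forall_notMem] at this
      exact this (ym n) ⟨hseg, hn⟩
    have hybad : ∀ n, ∃ ℓ ∈ L, ℓ (ym n) < 0 := by
      intro n
      have := hymD n
      rw [hDL] at this
      push_neg at this
      obtain ⟨ℓ, hℓ, hlt⟩ := this
      exact ⟨ℓ, hℓ, hlt⟩
    -- pigeonhole : one functional is frequently violated
    have hfreq : ∃ ℓ ∈ L, ∃ᶠ n in atTop, ℓ (ym n) < 0 := by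
      by_contra h
      push_neg at h
      have hev : ∀ᶠ n in atTop, ∀ ℓ ∈ L, 0 ≤ ℓ (ym n) := by
        rw [eventually_all_finset]
        intro ℓ hℓ
        have := h ℓ hℓ
        filter_upwards [this] with n hn
        exact hn
      obtain ⟨n, hn⟩ := hev.exists
      obtain ⟨ℓ, hℓ, hlt⟩ := hybad n
      exact absurd (hn ℓ hℓ) (not_le.2 hlt)
    obtain ⟨ℓ, hℓL, hℓfreq⟩ := hfreq
    have hℓten : Tendsto (fun n => ℓ (ym n)) atTop (𝓝 (ℓ y)) :=
      (hcont ℓ).continuousAt.tendsto.comp hyten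
    have hy0 : ℓ y ≤ 0 := by
      by_contra hpos
      push_neg at hpos
      have hev : ∀ᶠ n in atTop, 0 < ℓ (ym n) := hℓten.eventually (lt_mem_nhds hpos)
      obtain ⟨n, h1, h2⟩ := (hℓfreq.and_eventually hev).exists
      linarith
    -- y is the midpoint of Sig and Sig - c₀ • S, both of which satisfy ℓ ≥ 0
    have hySig : ℓ y = ℓ Sig - (c₀ / 2) * ℓ S := by
      rw [hy, map_sub, map_smul, smul_eq_mul]
    have hΓSig : ℓ (Sig - c₀ • S) = ℓ Sig - c₀ * ℓ S := by
      rw [map_sub, map_smul, smul_eq_mul]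
    have hℓSig : 0 ≤ ℓ Sig := hSigL ℓ hℓL
    have hℓΓ : 0 ≤ ℓ Sig - c₀ * ℓ S := by rw [← hΓSig]; exact hGammaInf ℓ hℓL
    have hyz : ℓ y = 0 := le_antisymm hy0 (by rw [hySig]; linarith)
    rcases lt_trichotomy (ℓ S) 0 with hs | hs | hs
    · nlinarith [hySig, hyz]
    · -- ℓ S = 0 : then ℓ (Γ (ψ n)) = ℓ (ym n) < 0 for some n
      obtain ⟨n, hn⟩ := hℓfreq.exists
      have h1 : ℓ (ym n) = ℓ (Sm (ψ n)) := by
        rw [hym, map_sub, map_smul, smul_eq_mul, hs, mul_zero, sub_zero]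
      have h2 : ℓ (Γ (ψ n)) = ℓ (Sm (ψ n)) := by
        rw [hΓ (ψ n), map_sub, map_smul, smul_eq_mul, hs, mul_zero, sub_zero]
      have h3 : 0 ≤ ℓ (Γ (ψ n)) := (hDL _).1 (hΓD (ψ n)) ℓ hℓL
      rw [h2, ← h1] at h3
      linarith
    · nlinarith [hySig, hyz]
  refine ⟨hc0, ?_⟩
  have h2 : Tendsto (fun m => Sm m - c m • S) atTop (𝓝 (Sig - (0:ℝ) • S)) :=
    hlim.sub (hc0.smul_const S)
  rw [zero_smul, sub_zero] at h2
  exact h2.congr (fun m => (hΓ m).symm)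
end

section
/- If C ⊆ R^N is a rational polyhedral cone, then C ∩ Z^N is a finitely generated monoid (Gordan's Lemma). -/
open Set

/-- Gordan's Lemma.  If `C ⊆ ℝ^N` is a rational polyhedral cone (the set of nonnegative
real combinations of finitely many rational vectors), then the monoid `C ∩ ℤ^N` of
integral points of `C` is a finitely generated monoid. -/
theorem gordan {N : ℕ} (C : Set (Fin N → ℝ))
    (hC : ∃ s : Finset (Fin N → ℝ), (∀ v ∈ s, ∀ i, ∃ q : ℚ, v i = (q : ℝ)) ∧
      C = {x | ∃ c : (Fin N → ℝ) → ℝ, (∀ v, 0 ≤ c v) ∧ x = ∑ v ∈ s, c v • v}) :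
    ∃ G : Finset (Fin N → ℝ),
      ((G : Set (Fin N → ℝ)) ⊆ {x ∈ C | ∀ i, ∃ z : ℤ, x i = (z : ℝ)}) ∧
      ∀ x ∈ C, (∀ i, ∃ z : ℤ, x i = (z : ℝ)) →
        ∃ a : (Fin N → ℝ) → ℕ, x = ∑ v ∈ G, (a v : ℝ) • v := by
  classical
  obtain ⟨s, hrat, hCdef⟩ := hC
  -- rational coordinates
  set q : (Fin N → ℝ) → Fin N → ℚ :=
    fun v i => if h : ∃ q : ℚ, v i = (q : ℝ) then h.choose else 0 with hqdef
  have hqv : ∀ v ∈ s, ∀ i, v i = ((q v i : ℚ) : ℝ) := by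
    intro v hv i
    have h := hrat v hv i
    simp only [hqdef, dif_pos h]
    exact h.choose_spec
  -- common denominators
  set d : (Fin N → ℝ) → ℕ := fun v => ∏ i, (q v i).den with hddef
  have hdpos : ∀ v, 0 < d v := fun v => Finset.prod_pos (fun i _ => (q v i).pos)
  set w : (Fin N → ℝ) → (Fin N → ℝ) := fun v => (d v : ℝ) • v with hwdef
  have hwapp : ∀ v i, w v i = (d v : ℝ) * v i := fun v i => rfl
  -- scaled generators are integral
  have hwint : ∀ v ∈ s, ∀ i, ∃ z : ℤ, w v i = (z : ℝ) := by
    intro v hv i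
    obtain ⟨m, hm⟩ := Finset.dvd_prod_of_mem (fun j => (q v j).den) (Finset.mem_univ i)
    refine ⟨(m : ℤ) * (q v i).num, ?_⟩
    have hden : (q v i) * ((q v i).den : ℚ) = ((q v i).num : ℚ) := Rat.mul_den_eq_num _
    have key : ((d v : ℕ) : ℚ) * (q v i) = (((m : ℤ) * (q v i).num : ℤ) : ℚ) := by
      have hmq : ((d v : ℕ) : ℚ) = ((q v i).den : ℚ) * (m : ℚ) := by
        rw [hddef]; exact_mod_cast congrArg (fun n : ℕ => (n : ℚ)) hm
      rw [hmq]
      push_cast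
      rw [mul_comm ((q v i).den : ℚ) (m : ℚ), mul_assoc, mul_comm ((q v i).den : ℚ) _, hden]
    have := congrArg (fun r : ℚ => (r : ℝ)) key
    push_cast at this
    rw [hwapp, hqv v hv i]
    push_cast
    linarith
  -- scaled generators are in C
  have hwC : ∀ v ∈ s, w v ∈ C := by
    intro v hv
    rw [hCdef]
    refine ⟨fun u => if u = v then (d v : ℝ) else 0, fun u => by dsimp only; split <;> positivity, ?_⟩
    rw [Finset.sum_eq_single v (fun u _ hne => by simp [hne]) (fun h => absurd hv h)]
    simp [hwdef]
  -- the coordinate bound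
  set b : Fin N → ℝ := fun i => ∑ v ∈ s, |w v i| with hbdef
  -- the finite fundamental-domain set
  set F : Set (Fin N → ℝ) :=
    {y | y ∈ C ∧ (∀ i, ∃ z : ℤ, y i = (z : ℝ)) ∧ ∀ i, |y i| ≤ b i} with hFdef
  have hFfin : F.Finite := by
    have hsub : F ⊆ Set.pi Set.univ
        (fun i => (fun z : ℤ => (z : ℝ)) '' (Set.Icc (-⌈b i⌉) ⌈b i⌉)) := by
      rintro y ⟨-, hyint, hyb⟩ i -
      obtain ⟨z, hz⟩ := hyint i
      have habs := abs_le.mp (hz ▸ hyb i)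
      refine ⟨z, ⟨?_, ?_⟩, hz.symm⟩
      · have h2 : (-⌈b i⌉ : ℝ) ≤ (z : ℝ) := by
          have := Int.le_ceil (b i); linarith [habs.1]
        exact_mod_cast h2
      · have h2 : (z : ℝ) ≤ (⌈b i⌉ : ℝ) := (habs.2).trans (Int.le_ceil _)
        exact_mod_cast h2
    exact Set.Finite.subset (Set.Finite.pi (fun i => (Set.finite_Icc _ _).image _)) hsub
  refine ⟨s.image w ∪ hFfin.toFinset, ?_, ?_⟩
  · intro u hu
    simp only [Finset.coe_union, Set.mem_union, Finset.coe_image, Set.mem_image,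
      Finset.mem_coe, Set.Finite.coe_toFinset] at hu
    rcases hu with ⟨v, hv, rfl⟩ | hu
    · exact ⟨hwC v hv, hwint v hv⟩
    · exact ⟨hu.1, hu.2.1⟩
  · intro x hx hxint
    rw [hCdef] at hx
    obtain ⟨c, hc0, hxc⟩ := hx
    -- rescaled coefficients
    set t : (Fin N → ℝ) → ℝ := fun v => c v / d v with htdef
    have ht0 : ∀ v, 0 ≤ t v := fun v => div_nonneg (hc0 v) (by positivity)
    have hxw : x = ∑ v ∈ s, t v • w v := by
      rw [hxc]
      refine Finset.sum_congr rfl (fun v hv => ?_)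
      rw [hwdef, htdef, smul_smul]
      congr 1
      have : (d v : ℝ) ≠ 0 := by positivity
      field_simp
    set n : (Fin N → ℝ) → ℕ := fun v => ⌊t v⌋.toNat with hndef
    have hncast : ∀ v, ((n v : ℕ) : ℝ) = ((⌊t v⌋ : ℤ) : ℝ) := by
      intro v
      have h : ((⌊t v⌋.toNat : ℤ)) = ⌊t v⌋ := Int.toNat_of_nonneg (Int.floor_nonneg.mpr (ht0 v))
      exact_mod_cast congrArg (fun z : ℤ => (z : ℝ)) h
    have hnle : ∀ v, (n v : ℝ) ≤ t v := fun v => (hncast v) ▸ Int.floor_le (t v)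
    have hfrac1 : ∀ v, t v - n v < 1 := by
      intro v
      rw [hncast v]
      have := Int.lt_floor_add_one (t v)
      linarith
    set y : Fin N → ℝ := x - ∑ v ∈ s, (n v : ℝ) • w v with hydef
    have hyfrac : y = ∑ v ∈ s, (t v - n v) • w v := by
      rw [hydef, hxw, ← Finset.sum_sub_distrib]
      exact Finset.sum_congr rfl fun v hv => by rw [sub_smul]
    have hyC : y ∈ C := by
      rw [hCdef]
      refine ⟨fun u => if u ∈ s then (t u - n u) * d u else 0, ?_, ?_⟩
      · intro u
        dsimp only
        split
        · exact mul_nonneg (by linarith [hnle u]) (by positivity)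
        · exact le_refl _
      · rw [hyfrac]
        refine Finset.sum_congr rfl fun u hu => ?_
        dsimp only
        rw [if_pos hu, hwdef, smul_smul]
    have hyint : ∀ i, ∃ z : ℤ, y i = (z : ℝ) := by
      intro i
      obtain ⟨zx, hzx⟩ := hxint i
      set zw : (Fin N → ℝ) → ℤ :=
        fun v => if h : ∃ z : ℤ, w v i = (z : ℝ) then h.choose else 0 with hzwdef
      refine ⟨zx - ∑ v ∈ s, (n v : ℤ) * zw v, ?_⟩
      have hy : y i = x i - ∑ v ∈ s, (n v : ℝ) * (w v i) := by
        simp [hydef, Finset.sum_apply]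
      rw [hy, hzx]
      push_cast
      congr 1
      refine Finset.sum_congr rfl fun v hv => ?_
      have h := hwint v hv i
      simp only [hzwdef, dif_pos h]
      exact congrArg (fun r => ((n v : ℝ)) * r) h.choose_spec
    have hyb : ∀ i, |y i| ≤ b i := by
      intro i
      have hyi : y i = ∑ v ∈ s, (t v - n v) * (w v i) := by
        rw [hyfrac]; simp [Finset.sum_apply]
      rw [hyi, hbdef]
      calc |∑ v ∈ s, (t v - n v) * w v i| ≤ ∑ v ∈ s, |(t v - n v) * w v i| :=
            Finset.abs_sum_le_sum_abs _ _
        _ ≤ ∑ v ∈ s, |w v i| := by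
            refine Finset.sum_le_sum fun v hv => ?_
            rw [abs_mul]
            have h0 : 0 ≤ t v - n v := by linarith [hnle v]
            have h1 : |t v - n v| ≤ 1 := by rw [abs_of_nonneg h0]; linarith [hfrac1 v]
            calc |t v - n v| * |w v i| ≤ 1 * |w v i| :=
                  mul_le_mul_of_nonneg_right h1 (abs_nonneg _)
              _ = |w v i| := one_mul _
    have hyG : y ∈ s.image w ∪ hFfin.toFinset :=
      Finset.mem_union_right _ (hFfin.mem_toFinset.mpr ⟨hyC, hyint, hyb⟩)
    refine ⟨fun u => (∑ v ∈ s.filter (fun v => w v = u), n v) + (if u = y then 1 else 0), ?_⟩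
    have hmaps : ∀ v ∈ s, w v ∈ s.image w ∪ hFfin.toFinset :=
      fun v hv => Finset.mem_union_left _ (Finset.mem_image_of_mem w hv)
    have key : ∑ u ∈ s.image w ∪ hFfin.toFinset,
        (((∑ v ∈ s.filter (fun v => w v = u), n v) + (if u = y then 1 else 0) : ℕ) : ℝ) • u
        = (∑ u ∈ s.image w ∪ hFfin.toFinset,
            ((∑ v ∈ s.filter (fun v => w v = u), n v : ℕ) : ℝ) • u)
          + ∑ u ∈ s.image w ∪ hFfin.toFinset,
            (((if u = y then 1 else 0 : ℕ)) : ℝ) • u := by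
      rw [← Finset.sum_add_distrib]
      refine Finset.sum_congr rfl fun u hu => ?_
      push_cast
      rw [add_smul]
    have h1 : ∑ u ∈ s.image w ∪ hFfin.toFinset,
        ((∑ v ∈ s.filter (fun v => w v = u), n v : ℕ) : ℝ) • u
        = ∑ v ∈ s, (n v : ℝ) • w v := by
      rw [← Finset.sum_fiberwise_of_maps_to hmaps (fun v => (n v : ℝ) • w v)]
      refine Finset.sum_congr rfl fun u hu => ?_
      rw [Nat.cast_sum, Finset.sum_smul]
      exact Finset.sum_congr rfl fun v hv => by rw [(Finset.mem_filter.mp hv).2]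
    have h2 : ∑ u ∈ s.image w ∪ hFfin.toFinset, (((if u = y then 1 else 0 : ℕ)) : ℝ) • u
        = y := by
      have hcongr : ∀ u ∈ s.image w ∪ hFfin.toFinset,
          (((if u = y then 1 else 0 : ℕ)) : ℝ) • u = if u = y then u else 0 := by
        intro u hu; split <;> simp
      rw [Finset.sum_congr rfl hcongr, Finset.sum_ite_eq' _ y (fun u => u), if_pos hyG]
    rw [key, h1, h2, hydef]
    abel
end

section
/- Let P ⊆ R^N be a rational polytope, x ∈ P, k a positive integer, and ε > 0. Then there exist finitely many points x_1, …, x_m ∈ P and positive integers k_1, …, k_m divisible by k, such that (k_i / k) x_i ∈ Z^N, ‖x − x_i‖ < ε / k_i for each i, and x is a convex linear combination of the x_i. -/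
open Module Filter

/-- A closed, non-discrete subgroup of a finite-dimensional normed space contains a line. -/
lemma closed_subgroup_line {E : Type*} [NormedAddCommGroup E] [NormedSpace ℝ E]
    [FiniteDimensional ℝ E] (H : AddSubgroup E) (hc : IsClosed (H : Set E))
    (hnd : ∀ ε : ℝ, 0 < ε → ∃ x ∈ H, x ≠ 0 ∧ ‖x‖ < ε) :
    ∃ u : E, ‖u‖ = 1 ∧ ∀ s : ℝ, s • u ∈ H := by
  have hx : ∀ n : ℕ, ∃ x : E, x ∈ H ∧ x ≠ 0 ∧ ‖x‖ < 1 / (n + 1) := by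
    intro n
    obtain ⟨x, hxH, hx0, hxn⟩ := hnd (1 / (n + 1)) (by positivity)
    exact ⟨x, hxH, hx0, hxn⟩
  choose x hxH hx0 hxn using hx
  have hnorm : ∀ n, (0:ℝ) < ‖x n‖ := fun n => norm_pos_iff.mpr (hx0 n)
  set u : ℕ → E := fun n => ‖x n‖⁻¹ • x n with hu
  have husph : ∀ n, u n ∈ Metric.sphere (0:E) 1 := by
    intro n
    simp only [Metric.mem_sphere, dist_zero_right, hu, norm_smul, norm_inv, norm_norm]
    field_simp
    exact div_self (hnorm n).ne'
  obtain ⟨v, hv, φ, hφ, hconv⟩ := (isCompact_sphere (0:E) 1).tendsto_subseq husph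
  have hvnorm : ‖v‖ = 1 := by simpa using hv
  refine ⟨v, hvnorm, fun s => ?_⟩
  -- s • v is the limit of ⌊s / ‖x (φ n)‖⌋ • x (φ n)
  have hxφ : Tendsto (fun n => ‖x (φ n)‖) atTop (nhds 0) := by
    have h1 : Tendsto (fun n : ℕ => 1 / ((n:ℝ) + 1)) atTop (nhds 0) :=
      tendsto_one_div_add_atTop_nhds_zero_nat
    refine squeeze_zero (fun n => (hnorm _).le) (fun n => (hxn (φ n)).le.trans ?_) h1
    have := hφ.id_le n
    gcongr
    exact_mod_cast this
  have key : Tendsto (fun n => (⌊s / ‖x (φ n)‖⌋ : ℝ) • x (φ n)) atTop (nhds (s • v)) := by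
    have heq : ∀ n, (⌊s / ‖x (φ n)‖⌋ : ℝ) • x (φ n)
        = ((⌊s / ‖x (φ n)‖⌋ : ℝ) * ‖x (φ n)‖) • u (φ n) := by
      intro n
      rw [hu]
      rw [smul_smul]
      congr 1
      rw [mul_assoc, mul_inv_cancel₀ (hnorm (φ n)).ne', mul_one]
    simp only [heq]
    have hscal : Tendsto (fun n => (⌊s / ‖x (φ n)‖⌋ : ℝ) * ‖x (φ n)‖) atTop (nhds s) := by
      have hub : ∀ n, |(⌊s / ‖x (φ n)‖⌋ : ℝ) * ‖x (φ n)‖ - s| ≤ ‖x (φ n)‖ := by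
        intro n
        have h1 : s = (s / ‖x (φ n)‖) * ‖x (φ n)‖ := by
          rw [div_mul_cancel₀ _ (hnorm (φ n)).ne']
        rw [abs_le]
        constructor
        · nlinarith [Int.floor_le (s / ‖x (φ n)‖), Int.lt_floor_add_one (s / ‖x (φ n)‖),
            hnorm (φ n)]
        · nlinarith [Int.floor_le (s / ‖x (φ n)‖), Int.lt_floor_add_one (s / ‖x (φ n)‖),
            hnorm (φ n)]
      have : Tendsto (fun n => (⌊s / ‖x (φ n)‖⌋ : ℝ) * ‖x (φ n)‖ - s) atTop (nhds 0) := by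
        refine squeeze_zero_norm hub hxφ
      have := this.add_const s
      simpa using this
    exact hscal.smul hconv
  have hmem : ∀ n, (⌊s / ‖x (φ n)‖⌋ : ℝ) • x (φ n) ∈ H := by
    intro n
    have := AddSubgroup.zsmul_mem H (hxH (φ n)) ⌊s / ‖x (φ n)‖⌋
    simpa [Int.cast_smul_eq_zsmul ℝ] using this
  exact hc.mem_of_tendsto key (Eventually.of_forall hmem)


open Module Submodule

/-- Any proper closed subgroup of a f.d. real inner product space is annihilated mod `cℤ`
by some nonzero linear functional. -/
lemma closed_subgroup_functional :
    ∀ (n : ℕ) (E : Type) (_ : NormedAddCommGroup E) (_ : InnerProductSpace ℝ E)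
      (_ : FiniteDimensional ℝ E), finrank ℝ E ≤ n →
      ∀ H : AddSubgroup E, IsClosed (H : Set E) → (H : Set E) ≠ Set.univ →
      ∃ φ : E →ₗ[ℝ] ℝ, φ ≠ 0 ∧ ∃ c : ℝ, ∀ x ∈ H, ∃ m : ℤ, φ x = m * c := by
  intro n
  induction n with
  | zero =>
    intro E _ _ _ hrank H _ hproper
    exfalso
    apply hproper
    have : Subsingleton E := by
      have : finrank ℝ E = 0 := Nat.le_zero.mp hrank
      exact (finrank_zero_iff (R := ℝ)).mp this
    ext x
    simp only [Set.mem_univ, iff_true, SetLike.mem_coe]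
    have : x = 0 := Subsingleton.elim x 0
    rw [this]; exact H.zero_mem
  | succ n ih =>
    intro E _ _ _ hrank H hclosed hproper
    by_cases hspan : span ℝ (H : Set E) = ⊤
    · by_cases hdisc : ∃ ε : ℝ, 0 < ε ∧ ∀ x ∈ H, ‖x‖ < ε → x = 0
      · -- discrete full lattice case
        obtain ⟨ε, hε, hsep⟩ := hdisc
        set L : Submodule ℤ E := AddSubgroup.toIntSubmodule H with hL
        have hLcoe : (L : Set E) = (H : Set E) := rfl
        haveI : DiscreteTopology L := by
          rw [discreteTopology_iff_isOpen_singleton_zero]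
          have : ({0} : Set L) = (Subtype.val) ⁻¹' (Metric.ball (0:E) ε) := by
            ext y
            simp only [Set.mem_singleton_iff, Set.mem_preimage, Metric.mem_ball,
              dist_zero_right]
            constructor
            · rintro rfl; simpa using hε
            · intro hy
              exact Subtype.ext (hsep y.1 y.2 hy)
          rw [this]
          exact isOpen_induced Metric.isOpen_ball
        haveI : IsZLattice ℝ L := ⟨by rw [hLcoe]; exact hspan⟩
        haveI := ZLattice.module_free ℝ L
        haveI := ZLattice.module_finite ℝ L
        set b := Module.Free.chooseBasis ℤ L with hb
        set B := Basis.ofZLatticeBasis ℝ L b with hB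
        have hne : Nonempty (Module.Free.ChooseBasisIndex ℤ L) := by
          rw [← Fintype.card_pos_iff, ← Module.finrank_eq_card_chooseBasisIndex]
          have h1 : finrank ℤ ↥L = finrank ℝ E := ZLattice.rank ℝ L
          rw [h1]
          by_contra h
          push_neg at h
          have : finrank ℝ E = 0 := Nat.le_zero.mp h
          have : Subsingleton E := (finrank_zero_iff (R := ℝ)).mp this
          apply hproper
          ext x
          simp only [Set.mem_univ, iff_true, SetLike.mem_coe]
          rw [Subsingleton.elim x 0]; exact H.zero_mem
        obtain ⟨i₀⟩ := hne
        refine ⟨B.coord i₀, ?_, 1, ?_⟩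
        · intro h0
          have := congrArg (fun f : E →ₗ[ℝ] ℝ => f (B i₀)) h0
          simp only [Basis.coord_apply, Basis.repr_self, Finsupp.single_eq_same,
            LinearMap.zero_apply] at this
          exact one_ne_zero this
        · intro x hx
          refine ⟨b.repr ⟨x, hx⟩ i₀, ?_⟩
          have := Basis.ofZLatticeBasis_repr_apply ℝ L b ⟨x, hx⟩ i₀
          simp only [Basis.coord_apply, mul_one]
          rw [← hB] at this
          exact this
      · -- non-discrete: contains a line, induct
        push_neg at hdisc
        have hnd : ∀ ε : ℝ, 0 < ε → ∃ x ∈ H, x ≠ 0 ∧ ‖x‖ < ε := by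
          intro ε hε
          obtain ⟨x, hxH, hxn, hx0⟩ := hdisc ε hε
          exact ⟨x, hxH, hx0, hxn⟩
        obtain ⟨u, hu1, hline⟩ := closed_subgroup_line H hclosed hnd
        have hu0 : u ≠ 0 := by intro h; rw [h] at hu1; simp at hu1
        set W : Submodule ℝ E := (span ℝ {u})ᗮ with hW
        have hWrank : finrank ℝ W ≤ n := by
          have h1 : finrank ℝ (span ℝ {u}) + finrank ℝ W = finrank ℝ E :=
            Submodule.finrank_add_finrank_orthogonal _
          rw [finrank_span_singleton hu0] at h1
          omega
        set H' : AddSubgroup W := AddSubgroup.comap (W.subtype.toAddMonoidHom) H with hH'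
        have hH'closed : IsClosed (H' : Set W) := by
          have : (H' : Set W) = (Subtype.val) ⁻¹' (H : Set E) := rfl
          rw [this]
          exact hclosed.preimage continuous_subtype_val
        have hH'proper : (H' : Set W) ≠ Set.univ := by
          intro hWH
          apply hproper
          ext x
          simp only [Set.mem_univ, iff_true, SetLike.mem_coe]
          -- decompose x
          have hdec : x - ↑((orthogonalProjection W) x) ∈ Wᗮ :=
            by have := Submodule.sub_starProjection_mem_orthogonal (K := W) x; exact this
          rw [show Wᗮ = span ℝ {u} from Submodule.orthogonal_orthogonal _] at hdec
          obtain ⟨a, ha⟩ := Submodule.mem_span_singleton.mp hdec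
          have h1 : ((orthogonalProjection W) x : E) ∈ H :=
            Set.eq_univ_iff_forall.mp hWH ((orthogonalProjection W) x)
          have h2 : x - ↑((orthogonalProjection W) x) ∈ H := by rw [← ha]; exact hline a
          have := H.add_mem h2 h1
          simpa using this
        obtain ⟨ψ, hψ0, c, hψ⟩ := ih W inferInstance inferInstance inferInstance hWrank
          H' hH'closed hH'proper
        refine ⟨ψ.comp ((orthogonalProjection W).toLinearMap), ?_, c, ?_⟩
        · intro h0
          obtain ⟨w, hw⟩ : ∃ w : W, ψ w ≠ 0 := by
            by_contra h
            push_neg at h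
            exact hψ0 (LinearMap.ext fun w => by rw [h w]; rfl)
          apply hw
          have := congrArg (fun f : E →ₗ[ℝ] ℝ => f ↑w) h0
          simp only [LinearMap.coe_comp, Function.comp_apply, ContinuousLinearMap.coe_coe,
            LinearMap.zero_apply] at this
          rw [orthogonalProjection_mem_subspace_eq_self w] at this
          exact this
        · intro x hx
          have hdec : x - ↑((orthogonalProjection W) x) ∈ Wᗮ :=
            by have := Submodule.sub_starProjection_mem_orthogonal (K := W) x; exact this
          rw [show Wᗮ = span ℝ {u} from Submodule.orthogonal_orthogonal _] at hdec
          obtain ⟨a, ha⟩ := Submodule.mem_span_singleton.mp hdec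
          have hproj : ((orthogonalProjection W) x) ∈ H' := by
            show ((orthogonalProjection W) x : E) ∈ H
            have h2 : x - ↑((orthogonalProjection W) x) ∈ H := by rw [← ha]; exact hline a
            have := H.sub_mem hx h2
            simpa using this
          obtain ⟨m, hm⟩ := hψ _ hproj
          exact ⟨m, hm⟩
    · -- span not top: orthogonal vector
      have : (span ℝ (H : Set E))ᗮ ≠ ⊥ := by
        intro h
        apply hspan
        have := Submodule.orthogonal_orthogonal (span ℝ (H : Set E))
        rw [h] at this
        rw [← this, Submodule.bot_orthogonal_eq_top]
      obtain ⟨u, huW, hu0⟩ := Submodule.exists_mem_ne_zero_of_ne_bot this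
      refine ⟨innerₛₗ ℝ u, ?_, 0, ?_⟩
      · intro h0
        have := congrArg (fun f : E →ₗ[ℝ] ℝ => f u) h0
        simp only [innerₛₗ_apply_apply, LinearMap.zero_apply] at this
        exact hu0 (inner_self_eq_zero.mp this)
      · intro x hx
        refine ⟨0, ?_⟩
        simp only [innerₛₗ_apply_apply, Int.cast_zero, zero_mul]
        have h := (Submodule.mem_orthogonal (span ℝ (H : Set E)) u).mp huW x
          (Submodule.subset_span hx)
        exact inner_eq_zero_symm.mp h


open Module Submodule

/-- Kronecker's theorem: if `1, z 0, ..., z (e-1)` are linearly independent over `ℚ`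
(equivalently over `ℤ`), then `{t • z - p : t ∈ ℕ+, p ∈ ℤ^e}` is dense. -/
lemma kronecker_positive (e : ℕ) (z : Fin e → ℝ)
    (hz : ∀ (c : Fin e → ℤ) (n : ℤ), ∑ i, (c i : ℝ) * z i = (n : ℝ) → c = 0)
    (a : Fin e → ℝ) (ε : ℝ) (hε : 0 < ε) :
    ∃ (t : ℤ) (p : Fin e → ℤ), 0 < t ∧ ∀ i, |(t : ℝ) * z i - p i - a i| < ε := by
  rcases Nat.eq_zero_or_pos e with he | he
  · subst he
    exact ⟨1, 0, one_pos, fun i => absurd i.2 (by omega)⟩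
  -- set up the subgroup in Euclidean space
  set E := EuclideanSpace ℝ (Fin e) with hE
  have hcoord : ∀ w : EuclideanSpace ℝ (Fin e), ∀ i, |w i| ≤ ‖w‖ := by
    intro w i
    rw [EuclideanSpace.norm_eq]
    rw [show |w i| = Real.sqrt (|w i|^2) by rw [Real.sqrt_sq_eq_abs, abs_abs]]
    apply Real.sqrt_le_sqrt
    have : |w i|^2 = ‖w i‖^2 := by rw [Real.norm_eq_abs]
    rw [this]
    exact Finset.single_le_sum (f := fun j => ‖w j‖^2) (fun j _ => by positivity)
      (Finset.mem_univ i)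
  set Γ : AddSubgroup E :=
    { carrier := {x : E | ∃ (t : ℤ) (p : Fin e → ℤ), ∀ i, x i = t * z i - p i}
      zero_mem' := ⟨0, 0, fun i => by
        simp only [Pi.zero_apply, Int.cast_zero, zero_mul, sub_zero]
        rfl⟩
      add_mem' := by
        rintro x y ⟨t1, p1, h1⟩ ⟨t2, p2, h2⟩
        refine ⟨t1 + t2, p1 + p2, fun i => ?_⟩
        have : (x + y) i = x i + y i := rfl
        rw [this, h1 i, h2 i]
        simp only [Pi.add_apply]
        push_cast
        ring
      neg_mem' := by
        rintro x ⟨t1, p1, h1⟩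
        refine ⟨-t1, -p1, fun i => ?_⟩
        have : (-x) i = -(x i) := rfl
        rw [this, h1 i]
        simp only [Pi.neg_apply]
        push_cast
        ring } with hΓ
  -- Γ is dense
  have hdense : Dense (Γ : Set E) := by
    by_contra hnd
    have hne : ((Γ.topologicalClosure : AddSubgroup E) : Set E) ≠ Set.univ := by
      intro h
      apply hnd
      have : closure (Γ : Set E) = Set.univ := by
        rw [← h]; rfl
      rw [dense_iff_closure_eq, this]
    obtain ⟨φ, hφ0, c, hφ⟩ := closed_subgroup_functional (finrank ℝ E) E
      inferInstance inferInstance inferInstance le_rfl Γ.topologicalClosure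
      (AddSubgroup.isClosed_topologicalClosure _) hne
    set sgl : Fin e → E := fun i => EuclideanSpace.single i (1:ℝ) with hsgl
    have hdecomp : ∀ x : E, x = ∑ i, x i • sgl i := by
      intro x
      refine PiLp.ext fun j => ?_
      have h1 : (∑ i, x i • sgl i) j = ∑ i, x i * (EuclideanSpace.single i (1:ℝ)) j := by
        rw [WithLp.ofLp_sum, Finset.sum_apply]; rfl
      rw [h1]
      simp [EuclideanSpace.single_apply]
    have hφx : ∀ x : E, φ x = ∑ i, x i * φ (sgl i) := by
      intro x
      conv_lhs => rw [hdecomp x]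
      rw [map_sum]
      congr 1
      ext i
      rw [map_smul]
      rfl
    -- each -sgl i ∈ Γ
    have hsglΓ : ∀ i₀, (-(sgl i₀)) ∈ Γ := by
      intro i₀
      refine ⟨0, fun i => if i = i₀ then 1 else 0, fun i => ?_⟩
      have : (-(sgl i₀)) i = -(sgl i₀ i) := rfl
      rw [this]
      simp only [hsgl, EuclideanSpace.single_apply]
      by_cases h : i = i₀ <;> simp [h]
    have hzΓ : (WithLp.toLp 2 (fun i => z i) : E) ∈ Γ := ⟨1, 0, fun i => by
      simp only [WithLp.ofLp_toLp, Pi.zero_apply, Int.cast_zero, sub_zero, Int.cast_one, one_mul]⟩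
    -- get integer values
    have hsglH := fun i₀ => hφ _ (Γ.le_topologicalClosure (hsglΓ i₀))
    obtain ⟨mz, hmz⟩ := hφ _ (Γ.le_topologicalClosure hzΓ)
    choose m hm using hsglH
    -- φ (sgl i) = -(m i) * c
    have hφsgl : ∀ i, φ (sgl i) = -(m i : ℝ) * c := by
      intro i
      have := hm i
      rw [map_neg] at this
      linarith
    have hc : c ≠ 0 := by
      intro hc0
      apply hφ0
      apply LinearMap.ext
      intro x
      rw [hφx x]
      simp only [LinearMap.zero_apply]
      apply Finset.sum_eq_zero
      intro i _
      rw [hφsgl i, hc0]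
      ring
    -- relation ∑ m i * z i ∈ ℤ
    have hrel : ∑ i, ((-(m i) : ℤ) : ℝ) * z i = (mz : ℝ) := by
      have h1 : φ (WithLp.toLp 2 (fun i => z i) : E) = ∑ i, z i * φ (sgl i) := hφx _
      rw [hmz] at h1
      have h2 : ∑ i, z i * φ (sgl i) = (∑ i, ((-(m i) : ℤ) : ℝ) * z i) * c := by
        rw [Finset.sum_mul]
        congr 1
        ext i
        rw [hφsgl i]
        push_cast
        ring
      rw [h2] at h1
      exact mul_right_cancel₀ hc h1.symm
    have := hz _ _ hrel
    -- so all m i = 0, hence φ = 0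
    apply hφ0
    apply LinearMap.ext
    intro x
    rw [hφx x]
    simp only [LinearMap.zero_apply]
    apply Finset.sum_eq_zero
    intro i _
    have hmi : (-(m i) : ℤ) = 0 := congrFun this i
    have : (m i : ℝ) = 0 := by
      have : ((m i : ℤ) : ℝ) = 0 := by
        have := congrArg (fun t : ℤ => ((-t : ℤ) : ℝ)) hmi
        push_cast at this ⊢
        linarith
      exact_mod_cast this
    rw [hφsgl i, this]
    ring
  -- Step A: small elements with positive t
  have stepA : ∀ η : ℝ, 0 < η → ∃ (T : ℤ) (P : Fin e → ℤ), 1 ≤ T ∧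
      ∀ i, |(T : ℝ) * z i - P i| < η := by
    intro η hη
    set η₁ := min η (1/2) with hη₁
    have hη₁pos : 0 < η₁ := lt_min hη (by norm_num)
    set zE : E := WithLp.toLp 2 (fun i => z i) with hzE
    have hU : IsOpen ((Metric.ball zE η₁) \ {zE}) :=
      Metric.isOpen_ball.sdiff isClosed_singleton
    have hUne : ((Metric.ball zE η₁) \ {zE}).Nonempty := by
      -- the point zE + (η₁/2) • sgl 0 is in it
      set i₀ : Fin e := ⟨0, he⟩
      refine ⟨zE + (η₁/2) • EuclideanSpace.single i₀ (1:ℝ), ?_, ?_⟩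
      · rw [Metric.mem_ball, dist_eq_norm]
        have : zE + (η₁/2) • EuclideanSpace.single i₀ (1:ℝ) - zE
            = (η₁/2) • EuclideanSpace.single i₀ (1:ℝ) := by abel
        rw [this, norm_smul, EuclideanSpace.norm_single]
        simp only [norm_one, mul_one, Real.norm_eq_abs]
        rw [abs_of_pos (by positivity)]
        linarith
      · simp only [Set.mem_singleton_iff]
        intro h
        have := congrArg (fun w : E => w i₀) h
        simp only [PiLp.add_apply, PiLp.smul_apply, EuclideanSpace.single_apply,
          if_pos rfl] at this
        have h2 : (η₁/2) * 1 = 0 := by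
          change zE i₀ + (η₁/2) • (1:ℝ) = zE i₀ at this
          simp only [smul_eq_mul] at this
          linarith
        simp at h2
        linarith
    obtain ⟨γ, hγΓ, hγU⟩ := hdense.exists_mem_open hU hUne
    obtain ⟨t', p', hγ⟩ := hγΓ
    have hγball : ‖γ - zE‖ < η₁ := by
      have := hγU.1
      rw [Metric.mem_ball, dist_eq_norm] at this
      exact this
    have hγcoord : ∀ i, |((t' - 1 : ℤ) : ℝ) * z i - p' i| < η₁ := by
      intro i
      have h1 := (hcoord (γ - zE) i).trans_lt hγball
      have h2 : (γ - zE) i = γ i - zE i := rfl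
      rw [h2, hγ i] at h1
      have h3 : zE i = z i := rfl
      rw [h3] at h1
      have : (t' : ℝ) * z i - p' i - z i = ((t' - 1 : ℤ) : ℝ) * z i - p' i := by
        push_cast; ring
      rw [← this]
      exact h1
    have ht'1 : t' ≠ 1 := by
      intro h
      subst h
      apply hγU.2
      simp only [Set.mem_singleton_iff]
      refine PiLp.ext fun i => ?_
      have h1 := hγcoord i
      simp only [sub_self, Int.cast_zero, zero_mul, zero_sub, abs_neg, Int.cast_abs] at h1
      have h2 : |(p' i : ℝ)| < 1 := by
        have hle : η₁ ≤ 1/2 := min_le_right _ _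
        have : |(p' i : ℝ)| < η₁ := by exact_mod_cast h1
        linarith
      have h3 : p' i = 0 := by
        have h4 := abs_lt.mp h2
        have h5 : -1 < p' i ∧ p' i < 1 := ⟨by exact_mod_cast h4.1, by exact_mod_cast h4.2⟩
        omega
      rw [hγ i, h3]
      simp [hzE]
    rcases lt_or_gt_of_ne ht'1 with h | h
    · -- t' ≤ 0, use -(t'-1)
      refine ⟨-(t' - 1), fun i => -(p' i), by omega, fun i => ?_⟩
      have := hγcoord i
      have heq : |((-(t' - 1) : ℤ) : ℝ) * z i - ((-(p' i) : ℤ) : ℝ)|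
          = |((t' - 1 : ℤ) : ℝ) * z i - p' i| := by
        push_cast
        rw [show -((t' : ℝ) - 1) * z i - -(p' i) = -(((t' : ℝ) - 1) * z i - p' i) by ring,
          abs_neg]
      rw [heq]
      exact this.trans_le (min_le_left _ _)
    · refine ⟨t' - 1, p', by omega, fun i => (hγcoord i).trans_le (min_le_left _ _)⟩
  -- Step B: main approximation
  set aE : E := WithLp.toLp 2 (fun i => a i) with haE
  obtain ⟨γ, hγball, hγΓ⟩ : ∃ γ : E, ‖γ - aE‖ < ε/2 ∧ γ ∈ Γ := by
    have := hdense.exists_mem_open Metric.isOpen_ball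
      (⟨aE, by rw [Metric.mem_ball, dist_self]; linarith⟩ :
        (Metric.ball aE (ε/2)).Nonempty)
    obtain ⟨γ, hγΓ, hγmem⟩ := this
    rw [Metric.mem_ball, dist_eq_norm] at hγmem
    exact ⟨γ, hγmem, hγΓ⟩
  obtain ⟨t, p, hγ⟩ := hγΓ
  have hγcoord : ∀ i, |(t : ℝ) * z i - p i - a i| < ε/2 := by
    intro i
    have h1 := (hcoord (γ - aE) i).trans_lt hγball
    have h2 : (γ - aE) i = γ i - aE i := rfl
    rw [h2, hγ i] at h1
    exact h1
  rcases le_or_gt 1 t with ht | ht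
  · exact ⟨t, p, by omega, fun i => (hγcoord i).trans (by linarith)⟩
  · set j : ℤ := 1 - t with hj
    have hjpos : 0 < j := by omega
    obtain ⟨T, P, hT1, hTP⟩ := stepA (ε / (2 * j)) (by positivity)
    refine ⟨t + j * T, fun i => p i + j * P i, by nlinarith, fun i => ?_⟩
    have h1 := hγcoord i
    have h2 := hTP i
    have key : ((t + j * T : ℤ) : ℝ) * z i - ((p i + j * P i : ℤ) : ℝ) - a i
        = ((t : ℝ) * z i - p i - a i) + (j : ℝ) * ((T : ℝ) * z i - P i) := by
      push_cast
      ring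
    rw [key]
    calc |((t : ℝ) * z i - p i - a i) + (j : ℝ) * ((T : ℝ) * z i - P i)|
        ≤ |(t : ℝ) * z i - p i - a i| + |(j : ℝ) * ((T : ℝ) * z i - P i)| := abs_add_le _ _
      _ = |(t : ℝ) * z i - p i - a i| + (j : ℝ) * |(T : ℝ) * z i - P i| := by
          rw [abs_mul, abs_of_pos (by exact_mod_cast hjpos : (0:ℝ) < (j:ℝ))]
      _ < ε/2 + (j : ℝ) * (ε / (2 * j)) := by
          have hj0 : (0:ℝ) < (j:ℝ) := by exact_mod_cast hjpos
          have := mul_lt_mul_of_pos_left h2 hj0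
          linarith
      _ = ε := by
          have hj0 : (j:ℝ) ≠ 0 := by
            have : (0:ℝ) < (j:ℝ) := by exact_mod_cast hjpos
            linarith
          field_simp
          ring


open Module

/-- If `e+1` vectors in `ℝ^e` are close to the vertex directions of a simplex surrounding `0`,
then `0` is a strictly positive combination of them. -/
lemma surround_kernel (e : ℕ) (v : Fin (e+1) → Fin e → ℝ)
    (hv1 : ∀ (j : Fin e) (i : Fin e),
      |v j.castSucc i - (if j = i then 1 else 0)| ≤ 1/(4*(e+1)))
    (hv2 : ∀ i : Fin e, |v (Fin.last e) i + 1| ≤ 1/(4*(e+1))) :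
    ∃ μ : Fin (e+1) → ℝ, (∀ j, 0 < μ j) ∧ ∀ i, ∑ j, μ j * v j i = 0 := by
  set δ₀ : ℝ := 1/(4*(e+1)) with hδ₀
  have hδ₀pos : 0 < δ₀ := by positivity
  -- the vectors are linearly dependent
  have hld : ¬ LinearIndependent ℝ v := by
    intro h
    have := h.fintype_card_le_finrank
    rw [Fintype.card_fin] at this
    have h2 : finrank ℝ (Fin e → ℝ) = e := by
      simp [finrank_pi]
    omega
  obtain ⟨g, hg0, j₁, hgj₁⟩ := Fintype.not_linearIndependent_iff.mp hld
  -- maximum of |g|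
  obtain ⟨j₂, -, hj₂⟩ := Finset.exists_max_image Finset.univ (fun j => |g j|)
    ⟨j₁, Finset.mem_univ j₁⟩
  set m := |g j₂| with hm
  have hmpos : 0 < m := lt_of_lt_of_le (abs_pos.mpr hgj₁) (hj₂ j₁ (Finset.mem_univ _))
  -- normalize sign
  set σ : ℝ := if 0 < g j₂ then 1 else -1 with hσ
  set μ' : Fin (e+1) → ℝ := fun j => σ * g j with hμ'
  have hμ'j₂ : μ' j₂ = m := by
    rw [hμ', hσ, hm]
    by_cases h : 0 < g j₂
    · simp [h, abs_of_pos h]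
    · simp only [if_neg h]
      push_neg at h
      rw [abs_of_nonpos h]; ring
  have hμ'le : ∀ j, |μ' j| ≤ m := by
    intro j
    rw [hμ']
    have : |σ| = 1 := by rw [hσ]; by_cases h : 0 < g j₂ <;> simp [h]
    rw [abs_mul, this, one_mul]
    exact hj₂ j (Finset.mem_univ _)
  have hsum0 : ∀ i, ∑ j, μ' j * v j i = 0 := by
    intro i
    have h1 := congrFun hg0 i
    have h2 : (∑ j, g j • v j) i = ∑ j, g j * v j i := by
      rw [Finset.sum_apply]
      rfl
    have h3 : (0 : Fin e → ℝ) i = 0 := rfl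
    rw [h2, h3] at h1
    rw [hμ']
    have : ∑ j, σ * g j * v j i = σ * ∑ j, g j * v j i := by
      rw [Finset.mul_sum]
      congr 1; ext j; ring
    rw [this, h1, mul_zero]
  -- coordinate estimates
  have hest : ∀ i : Fin e, |μ' i.castSucc - μ' (Fin.last e)| ≤ (e+1) * m * δ₀ := by
    intro i
    have h1 := hsum0 i
    rw [Fin.sum_univ_castSucc] at h1
    -- split each v into target + error
    have key : μ' i.castSucc - μ' (Fin.last e)
        = -(∑ j : Fin e, μ' j.castSucc * (v j.castSucc i - (if j = i then 1 else 0))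
            + μ' (Fin.last e) * (v (Fin.last e) i + 1)) := by
      have expand : ∑ j : Fin e, μ' j.castSucc * v j.castSucc i
          = ∑ j : Fin e, μ' j.castSucc * (v j.castSucc i - (if j = i then 1 else 0))
            + ∑ j : Fin e, μ' j.castSucc * (if j = i then 1 else 0) := by
        rw [← Finset.sum_add_distrib]
        congr 1; ext j; ring
      have hsingle : ∑ j : Fin e, μ' j.castSucc * (if j = i then 1 else 0)
          = μ' i.castSucc := by
        rw [Finset.sum_eq_single i]
        · simp
        · intro b _ hb; simp [hb]
        · intro h; exact absurd (Finset.mem_univ i) h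
      have hlast : μ' (Fin.last e) * v (Fin.last e) i
          = μ' (Fin.last e) * (v (Fin.last e) i + 1) - μ' (Fin.last e) := by ring
      rw [expand, hsingle, hlast] at h1
      linarith
    rw [key, abs_neg]
    calc |∑ j : Fin e, μ' j.castSucc * (v j.castSucc i - (if j = i then 1 else 0))
            + μ' (Fin.last e) * (v (Fin.last e) i + 1)|
        ≤ |∑ j : Fin e, μ' j.castSucc * (v j.castSucc i - (if j = i then 1 else 0))|
          + |μ' (Fin.last e) * (v (Fin.last e) i + 1)| := abs_add_le _ _
      _ ≤ (∑ j : Fin e, |μ' j.castSucc * (v j.castSucc i - (if j = i then 1 else 0))|)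
          + |μ' (Fin.last e) * (v (Fin.last e) i + 1)| := by
            gcongr
            exact Finset.abs_sum_le_sum_abs _ _
      _ ≤ (∑ _j : Fin e, m * δ₀) + m * δ₀ := by
            gcongr with j hj
            · rw [abs_mul]
              exact mul_le_mul (hμ'le _) (hv1 j i) (abs_nonneg _) (le_of_lt hmpos)
            · rw [abs_mul]
              exact mul_le_mul (hμ'le _) (hv2 i) (abs_nonneg _) (le_of_lt hmpos)
      _ = (e+1) * m * δ₀ := by
            rw [Finset.sum_const, Finset.card_univ, Fintype.card_fin]
            push_cast
            ring
  have hquarter : (e+1) * m * δ₀ ≤ m / 4 := by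
    rw [hδ₀]
    rw [show (e+1 : ℝ) * m * (1/(4*(e+1))) = m * ((e+1) / (4*(e+1))) by ring]
    have : ((e:ℝ)+1) / (4*((e:ℝ)+1)) = 1/4 := by
      rw [div_eq_div_iff (by positivity) (by norm_num)]
      ring
    rw [this]
    linarith
  -- all μ' j ≥ m/2
  have hlast_lb : m / 2 ≤ μ' (Fin.last e) := by
    rcases Fin.eq_castSucc_or_eq_last j₂ with ⟨i₀, hi₀⟩ | hl
    · have := (abs_le.mp (le_trans (hest i₀) hquarter)).2
      rw [← hi₀, hμ'j₂] at this
      linarith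
    · rw [← hl, hμ'j₂]; linarith
  have hall : ∀ j, m / 4 ≤ μ' j := by
    intro j
    rcases Fin.eq_castSucc_or_eq_last j with ⟨i₀, hi₀⟩ | hl
    · have := (abs_le.mp (le_trans (hest i₀) hquarter)).1
      rw [← hi₀] at this
      linarith
    · rw [hl]; linarith
  exact ⟨μ', fun j => lt_of_lt_of_le (by linarith) (hall j), hsum0⟩


/-- Rational simultaneous approximation with exact convex combination, for a totally
irrational vector `z`. -/
lemma rational_surround (e : ℕ) (z : Fin e → ℝ)
    (hz : ∀ (c : Fin e → ℤ) (n : ℤ), ∑ i, (c i : ℝ) * z i = (n : ℝ) → c = 0)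
    (tol : ℝ) (htol : 0 < tol) :
    ∃ (t : Fin (e+1) → ℤ) (p : Fin (e+1) → Fin e → ℤ) (μ : Fin (e+1) → ℝ),
      (∀ j, 0 < t j) ∧ (∀ j, 0 ≤ μ j) ∧ (∑ j, μ j = 1) ∧
      (∀ i, z i = ∑ j, μ j * ((p j i : ℝ) / (t j : ℝ))) ∧
      (∀ j i, |z i - (p j i : ℝ) / (t j : ℝ)| < tol / (t j : ℝ)) := by
  set δ₀ : ℝ := 1/(4*(e+1)) with hδ₀
  have hδ₀pos : 0 < δ₀ := by positivity
  have hδ₀lt : δ₀ < 1 := by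
    rw [hδ₀]
    rw [div_lt_one (by positivity)]
    have : (0:ℝ) ≤ (e:ℝ) := Nat.cast_nonneg e
    nlinarith
  set η : ℝ := tol / 2 with hη
  have hηpos : 0 < η := by positivity
  -- targets
  set A : Fin (e+1) → Fin e → ℝ :=
    fun j i => if (j:ℕ) = (i:ℕ) then 1 else if (j:ℕ) = e then -1 else 0 with hA
  have happrox : ∀ j : Fin (e+1), ∃ (t : ℤ) (p : Fin e → ℤ), 0 < t ∧
      ∀ i, |(t:ℝ) * z i - p i - η * A j i| < η * δ₀ := by
    intro j
    exact kronecker_positive e z hz (fun i => η * A j i) (η * δ₀) (by positivity)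
  choose t p ht hp using happrox
  -- the normalized error vectors
  set v : Fin (e+1) → Fin e → ℝ := fun j i => ((t j : ℝ) * z i - p j i) / η with hv
  have hv1 : ∀ (j : Fin e) (i : Fin e),
      |v j.castSucc i - (if j = i then 1 else 0)| ≤ δ₀ := by
    intro j i
    have h1 := hp j.castSucc i
    have hAeq : A j.castSucc i = (if j = i then 1 else 0) := by
      rw [hA]
      simp only [Fin.coe_castSucc]
      by_cases h : j = i
      · subst h; simp
      · have h2 : ¬((j:ℕ) = (i:ℕ)) := by simpa [Fin.ext_iff] using h
        have hne : ¬ ((j:ℕ) = e) := by omega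
        simp [h, h2, hne]
    rw [hAeq] at h1
    have : v j.castSucc i - (if j = i then 1 else 0)
        = ((t j.castSucc : ℝ) * z i - p j.castSucc i - η * (if j = i then 1 else 0)) / η := by
      rw [hv]
      field_simp
    rw [this, abs_div, abs_of_pos hηpos, div_le_iff₀ hηpos]
    calc |(t j.castSucc : ℝ) * z i - p j.castSucc i - η * (if j = i then 1 else 0)|
        ≤ η * δ₀ := le_of_lt h1
      _ = δ₀ * η := by ring
  have hv2 : ∀ i : Fin e, |v (Fin.last e) i + 1| ≤ δ₀ := by
    intro i
    have h1 := hp (Fin.last e) i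
    have hAeq : A (Fin.last e) i = -1 := by
      rw [hA]
      simp only [Fin.val_last]
      have h2 : ¬ ((e:ℕ) = (i:ℕ)) := by omega
      simp [h2]
    rw [hAeq] at h1
    have : v (Fin.last e) i + 1
        = ((t (Fin.last e) : ℝ) * z i - p (Fin.last e) i - η * (-1)) / η := by
      rw [hv]
      field_simp
      ring
    rw [this, abs_div, abs_of_pos hηpos, div_le_iff₀ hηpos]
    calc |(t (Fin.last e) : ℝ) * z i - p (Fin.last e) i - η * (-1)|
        ≤ η * δ₀ := le_of_lt h1
      _ = δ₀ * η := by ring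
  obtain ⟨μ', hμ'pos, hμ'sum⟩ := surround_kernel e v hv1 hv2
  -- exact relation ∑ μ' j * (t j * z i - p j i) = 0
  have hexact : ∀ i, ∑ j, μ' j * ((t j : ℝ) * z i - p j i) = 0 := by
    intro i
    have h1 := hμ'sum i
    have h2 : ∑ j, μ' j * v j i = (∑ j, μ' j * ((t j : ℝ) * z i - p j i)) / η := by
      rw [Finset.sum_div]
      congr 1; ext j
      rw [hv]
      field_simp
    rw [h2] at h1
    field_simp at h1
    exact h1.trans (mul_zero η)
  set S : ℝ := ∑ j, μ' j * (t j : ℝ) with hS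
  have hSpos : 0 < S := by
    rw [hS]
    apply Finset.sum_pos
    · intro j _
      have h1 := hμ'pos j
      have h2 : (0:ℝ) < (t j : ℝ) := by exact_mod_cast ht j
      positivity
    · exact ⟨0, Finset.mem_univ 0⟩
  refine ⟨t, p, fun j => μ' j * (t j : ℝ) / S, ht, ?_, ?_, ?_, ?_⟩
  · intro j
    have h1 := hμ'pos j
    have h2 : (0:ℝ) < (t j : ℝ) := by exact_mod_cast ht j
    positivity
  · rw [← Finset.sum_div]
    rw [← hS, div_self hSpos.ne']
  · intro i
    have h1 := hexact i
    have h2 : ∑ j, μ' j * (t j : ℝ) / S * ((p j i : ℝ) / (t j : ℝ))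
        = (∑ j, μ' j * (p j i : ℝ)) / S := by
      rw [Finset.sum_div]
      congr 1; ext j
      have htj : ((t j : ℝ)) ≠ 0 := by
        have : (0:ℝ) < (t j : ℝ) := by exact_mod_cast ht j
        linarith
      field_simp
    rw [h2]
    rw [eq_div_iff hSpos.ne']
    have h3 : ∑ j, μ' j * ((t j:ℝ) * z i) = ∑ j, μ' j * (p j i : ℝ) := by
      have h4 : ∑ j, μ' j * ((t j:ℝ) * z i - p j i)
          = ∑ j, μ' j * ((t j:ℝ) * z i) - ∑ j, μ' j * (p j i : ℝ) := by
        rw [← Finset.sum_sub_distrib]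
        congr 1; ext j; ring
      rw [h4] at h1
      linarith
    rw [← h3, Finset.mul_sum]
    congr 1; ext j; ring
  · intro j i
    have htj : (0:ℝ) < (t j : ℝ) := by exact_mod_cast ht j
    have h1 := hp j i
    have h2 : |z i - (p j i : ℝ) / (t j : ℝ)| = |(t j:ℝ) * z i - p j i| / (t j : ℝ) := by
      rw [show z i - (p j i : ℝ) / (t j : ℝ) = ((t j:ℝ) * z i - p j i) / (t j : ℝ) by
        field_simp]
      rw [abs_div, abs_of_pos htj]
    rw [h2, div_lt_div_iff₀ htj htj]
    have hAbound : |A j i| ≤ 1 := by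
      rw [hA]
      simp only
      split_ifs <;> simp
    have : |(t j:ℝ) * z i - p j i| ≤ |(t j:ℝ) * z i - p j i - η * A j i| + |η * A j i| := by
      calc |(t j:ℝ) * z i - p j i|
          = |((t j:ℝ) * z i - p j i - η * A j i) + η * A j i| := by congr 1; ring
        _ ≤ _ := abs_add_le _ _
    have hη1 : |η * A j i| ≤ η := by
      rw [abs_mul, abs_of_pos hηpos]
      nlinarith
    have hfin : |(t j:ℝ) * z i - p j i| < η * δ₀ + η := by
      calc |(t j:ℝ) * z i - p j i| ≤ |(t j:ℝ) * z i - p j i - η * A j i| + |η * A j i| := this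
        _ < η * δ₀ + η := by linarith [hp j i]
    calc |(t j:ℝ) * z i - p j i| * (t j:ℝ) < (η * δ₀ + η) * (t j:ℝ) := by
          exact mul_lt_mul_of_pos_right hfin htj
      _ ≤ tol * (t j:ℝ) := by
          have : η * δ₀ + η ≤ tol := by
            rw [hη]
            nlinarith
          exact mul_le_mul_of_nonneg_right this htj.le


/-- Decompose a finite family of reals as rational affine combinations of a
totally irrational family `z`. -/
lemma rational_structure (n : ℕ) (s : Fin n → ℝ) (hsum : ∑ i, s i = 1) :
    ∃ (e : ℕ) (z : Fin e → ℝ) (c : Fin n → ℚ) (C : Fin n → Fin e → ℚ),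
      (∀ (co : Fin e → ℤ) (m : ℤ), ∑ k, (co k : ℝ) * z k = (m : ℝ) → co = 0) ∧
      (∀ i, s i = (c i : ℝ) + ∑ k, (C i k : ℝ) * z k) ∧
      (∑ i, c i = 1) ∧
      (∀ k, ∑ i, C i k = 0) := by
  classical
  set V : Submodule ℚ ℝ := Submodule.span ℚ (insert (1:ℝ) (Set.range s)) with hV
  haveI : FiniteDimensional ℚ V := by
    apply FiniteDimensional.span_of_finite
    exact (Set.finite_range s).insert 1
  have h1V : (1:ℝ) ∈ V := Submodule.subset_span (Set.mem_insert _ _)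
  set one : V := ⟨1, h1V⟩ with hone
  have hone0 : one ≠ 0 := by
    intro h
    have : (1:ℝ) = 0 := congrArg Subtype.val h
    norm_num at this
  have li : LinearIndepOn ℚ id ({one} : Set V) :=
    (linearIndepOn_singleton_iff ℚ).mpr hone0
  set ι := ↥(li.extend (Set.subset_univ _)) with hι
  haveI : Fintype ι := FiniteDimensional.fintypeBasisIndex (Module.Basis.extend li)
  set B : Basis ι ℚ V := Module.Basis.extend li with hB
  have hone_mem : one ∈ li.extend (Set.subset_univ _) :=
    li.subset_extend _ (Set.mem_singleton one)
  set i₀ : ι := ⟨one, hone_mem⟩ with hi₀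
  set e := Fintype.card {j : ι // j ≠ i₀} with he
  set eqv : Fin e ≃ {j : ι // j ≠ i₀} := (Fintype.equivFin {j : ι // j ≠ i₀}).symm with heqv
  set z : Fin e → ℝ := fun k => (((eqv k : ι) : V) : ℝ) with hz
  -- B j = j as element of V
  have hBj : ∀ j : ι, (B j : V) = (j : V) := fun j => by
    rw [hB]; exact Module.Basis.extend_apply_self li j
  have hBi₀ : ((B i₀ : V) : ℝ) = 1 := by rw [hBj]
  have hBz : ∀ k, ((B (eqv k : ι) : V) : ℝ) = z k := by intro k; rw [hBj]
  -- sum splitting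
  have hsplit : ∀ a : ι → ℝ, ∑ j, a j = a i₀ + ∑ k, a (eqv k : ι) := by
    intro a
    rw [Finset.sum_eq_add_sum_sdiff_singleton_of_mem (Finset.mem_univ i₀) a]
    congr 1
    rw [Finset.sum_subtype (p := fun j => j ≠ i₀) _ (by intro x; simp) a]
    exact (Equiv.sum_comp eqv (fun j => a (j : ι))).symm
  -- coercion of ℚ-combinations
  have hcoe : ∀ a : ι → ℚ, ((↑(∑ j, a j • B j) : ℝ)) = ∑ j, (a j : ℝ) * ((B j : V) : ℝ) := by
    intro a
    rw [show ((↑(∑ j, a j • B j) : ℝ)) = V.subtype (∑ j, a j • B j) from rfl]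
    rw [map_sum]
    refine Finset.sum_congr rfl fun j _ => ?_
    rw [map_smul, Rat.smul_def]
    rfl
  -- independence over ℚ
  have hzQ : ∀ (q : Fin e → ℚ) (r : ℚ), ∑ k, (q k : ℝ) * z k = (r : ℝ) → q = 0 ∧ r = 0 := by
    intro q r hqr
    set a : ι → ℚ := fun j => if h : j = i₀ then -r else q (eqv.symm ⟨j, h⟩) with ha
    have h1 : a i₀ = -r := dif_pos rfl
    have h2 : ∀ k : Fin e, a (eqv k : ι) = q k := by
      intro k
      have hne : (eqv k : ι) ≠ i₀ := (eqv k).2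
      have hd : a (eqv k : ι) = q (eqv.symm ⟨(eqv k : ι), hne⟩) := dif_neg hne
      rw [hd]
      have hsub : (⟨(eqv k : ι), hne⟩ : {j : ι // j ≠ i₀}) = eqv k := Subtype.ext rfl
      rw [hsub, Equiv.symm_apply_apply]
    have hsum0 : ∑ j, a j • B j = 0 := by
      rw [← Submodule.coe_eq_zero, hcoe]
      rw [hsplit (fun j => (a j : ℝ) * ((B j : V) : ℝ))]
      rw [h1, hBi₀]
      have h3 : ∑ k, (a (eqv k : ι) : ℝ) * ((B (eqv k : ι) : V) : ℝ)
          = ∑ k, (q k : ℝ) * z k := by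
        congr 1; ext k; rw [h2 k, hBz k]
      rw [h3, hqr]
      push_cast
      ring
    have hall : ∀ j, a j = 0 :=
      Fintype.linearIndependent_iff.mp B.linearIndependent a hsum0
    constructor
    · ext k
      have h4 := hall (eqv k : ι)
      rw [h2 k] at h4
      simpa using h4
    · have h4 := hall i₀
      rw [h1] at h4
      linarith
  -- representation of each s i
  have hsV : ∀ i, s i ∈ V := fun i =>
    Submodule.subset_span (Set.mem_insert_of_mem _ ⟨i, rfl⟩)
  set c : Fin n → ℚ := fun i => B.repr ⟨s i, hsV i⟩ i₀ with hc
  set C : Fin n → Fin e → ℚ := fun i k => B.repr ⟨s i, hsV i⟩ (eqv k : ι) with hC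
  have hrep : ∀ i, s i = (c i : ℝ) + ∑ k, (C i k : ℝ) * z k := by
    intro i
    have h1 := B.sum_repr ⟨s i, hsV i⟩
    have h2 := congrArg (Subtype.val : V → ℝ) h1
    rw [hcoe (fun j => B.repr ⟨s i, hsV i⟩ j)] at h2
    rw [hsplit (fun j => ((B.repr ⟨s i, hsV i⟩ j : ℚ) : ℝ) * ((B j : V) : ℝ))] at h2
    rw [hBi₀] at h2
    have h3 : ∑ k, ((B.repr ⟨s i, hsV i⟩ (eqv k : ι) : ℚ) : ℝ) * ((B (eqv k : ι) : V) : ℝ)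
        = ∑ k, (C i k : ℝ) * z k := by
      refine Finset.sum_congr rfl fun k _ => ?_
      rw [hBz k]
    rw [h3] at h2
    have h4 : (s i : ℝ) = ((⟨s i, hsV i⟩ : V) : ℝ) := rfl
    rw [h4, ← h2, hc]
    ring
  -- integer independence
  have hzZ : ∀ (co : Fin e → ℤ) (m : ℤ), ∑ k, (co k : ℝ) * z k = (m : ℝ) → co = 0 := by
    intro co m hco
    have h1 : ∑ k, ((co k : ℚ) : ℝ) * z k = ((m : ℚ) : ℝ) := by
      push_cast
      push_cast at hco
      exact hco
    have := (hzQ (fun k => (co k : ℚ)) (m : ℚ) h1).1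
    ext k
    have h2 := congrFun this k
    simp only [Pi.zero_apply] at h2 ⊢
    exact_mod_cast h2
  -- sum facts
  have h1 : (1:ℝ) = ∑ i, ((c i : ℝ) + ∑ k, (C i k : ℝ) * z k) := by
    rw [← hsum]
    congr 1; ext i; exact hrep i
  rw [Finset.sum_add_distrib, Finset.sum_comm] at h1
  have hkey := hzQ (fun k => ∑ i, C i k) (1 - ∑ i, c i) (by
    push_cast
    have h2 : ∑ k, (∑ i, (C i k : ℝ)) * z k = ∑ k, ∑ i, (C i k : ℝ) * z k := by
      congr 1; ext k; rw [Finset.sum_mul]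
    rw [h2]
    linarith [h1])
  refine ⟨e, z, c, C, hzZ, hrep, ?_, ?_⟩
  · have h5 := hkey.2
    linarith
  · intro k
    exact congrFun hkey.1 k

lemma rat_den_mul (q : ℚ) (M : ℕ) (h : q.den ∣ M) : ∃ a : ℤ, (q : ℝ) * (M : ℝ) = (a : ℝ) := by
  obtain ⟨u, hu⟩ := h
  refine ⟨q.num * u, ?_⟩
  have hq : (q : ℝ) * (q.den : ℝ) = (q.num : ℝ) := by
    exact_mod_cast congrArg (Rat.cast : ℚ → ℝ) (Rat.mul_den_eq_num q)
  rw [hu]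
  push_cast
  rw [← mul_assoc, hq]




open Set

/-- A point of `ℝ^N` with all coordinates rational. -/
def IsRatPoint {N : ℕ} (x : Fin N → ℝ) : Prop := ∀ i, ∃ q : ℚ, x i = (q : ℝ)

/-- A rational polytope: the convex hull of finitely many rational points. -/
def IsRatPolytope {N : ℕ} (P : Set (Fin N → ℝ)) : Prop :=
  ∃ s : Finset (Fin N → ℝ), (∀ v ∈ s, IsRatPoint v) ∧ P = convexHull ℝ (s : Set (Fin N → ℝ))

set_option maxHeartbeats 1000000 in
/-- Diophantine approximation (Lemma 2.11).  Let `P ⊆ ℝ^N` be a rational polytope,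
`x ∈ P`, `k` a positive integer and `ε > 0`.  Then there are finitely many points
`xs i ∈ P` and positive integers `ks i` divisible by `k` such that `(ks i / k) • xs i`
is integral, `‖x - xs i‖ < ε / ks i`, and `x` is a convex linear combination of the
`xs i`. -/
theorem diophantine_approximation {N : ℕ} (P : Set (Fin N → ℝ)) (hP : IsRatPolytope P)
    (x : Fin N → ℝ) (hx : x ∈ P) (k : ℕ) (hk : 0 < k) (ε : ℝ) (hε : 0 < ε) :
    ∃ (m : ℕ) (xs : Fin m → Fin N → ℝ) (ks : Fin m → ℕ) (t : Fin m → ℝ),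
      (∀ i, xs i ∈ P) ∧
      (∀ i, 0 < ks i ∧ k ∣ ks i) ∧
      (∀ i j, ∃ z : ℤ, ((ks i : ℝ) / (k : ℝ)) * xs i j = (z : ℝ)) ∧
      (∀ i, ‖x - xs i‖ < ε / (ks i : ℝ)) ∧
      (∀ i, 0 ≤ t i) ∧ (∑ i, t i = 1) ∧ x = ∑ i, t i • xs i := by
  classical
  obtain ⟨sfin, hvrat, hPeq⟩ := hP
  have hx' : x ∈ convexHull ℝ (sfin : Set (Fin N → ℝ)) := by rw [← hPeq]; exact hx
  rw [Finset.convexHull_eq] at hx'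
  obtain ⟨w, hw0, hw1, hwx⟩ := hx'
  set J := sfin.filter (fun y => w y ≠ 0) with hJ
  have hJsum : ∑ y ∈ J, w y = 1 := by rw [hJ, Finset.sum_filter_ne_zero]; exact hw1
  have hxrep0 : ∑ y ∈ J, w y • y = x := by
    rw [hJ]
    rw [Finset.sum_filter_of_ne (by
      intro y hy h h0
      apply h
      rw [h0, zero_smul])]
    have h5 : sfin.centerMass w id = ∑ y ∈ sfin, w y • y := by
      rw [Finset.centerMass_eq_of_sum_1 sfin id hw1]
      simp only [id]
    rw [← h5]
    exact hwx
  set n := J.card with hn'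
  have hJne : J.Nonempty := by
    by_contra h
    rw [Finset.not_nonempty_iff_eq_empty] at h
    rw [h] at hJsum; simp at hJsum
  have hn : 0 < n := Finset.card_pos.mpr hJne
  set ev := J.equivFin with hev
  set vfun : Fin n → (Fin N → ℝ) := fun i => (ev.symm i : Fin N → ℝ) with hvfun
  set sj : Fin n → ℝ := fun i => w (vfun i) with hsj
  have hvmemJ : ∀ i, (vfun i) ∈ J := fun i => (ev.symm i).2
  have hvmem : ∀ i, vfun i ∈ sfin := fun i => Finset.mem_of_mem_filter _ (hvmemJ i)
  have hwpos : ∀ i, 0 < sj i := by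
    intro i
    have h2 := (Finset.mem_filter.mp (hvmemJ i)).2
    exact lt_of_le_of_ne (hw0 _ (hvmem i)) (Ne.symm h2)
  have hsumJ : ∀ f : (Fin N → ℝ) → ℝ, ∑ i, f (vfun i) = ∑ y ∈ J, f y := by
    intro f
    rw [show ∑ i, f (vfun i) = ∑ i : Fin n, (fun y : {z // z ∈ J} => f (y : Fin N → ℝ)) (ev.symm i)
      from rfl]
    rw [Equiv.sum_comp ev.symm (fun y : {z // z ∈ J} => f (y : Fin N → ℝ))]
    exact Finset.sum_coe_sort J f
  have hsumJv : ∀ f : (Fin N → ℝ) → (Fin N → ℝ), ∑ i, f (vfun i) = ∑ y ∈ J, f y := by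
    intro f
    rw [show ∑ i, f (vfun i) = ∑ i : Fin n,
      (fun y : {z // z ∈ J} => f (y : Fin N → ℝ)) (ev.symm i) from rfl]
    rw [Equiv.sum_comp ev.symm (fun y : {z // z ∈ J} => f (y : Fin N → ℝ))]
    exact Finset.sum_coe_sort J f
  have hsjsum : ∑ i, sj i = 1 := by
    rw [hsj]
    rw [hsumJ w]
    exact hJsum
  have hxvec : x = ∑ i, sj i • vfun i := by
    rw [hsj, show ∑ i, w (vfun i) • vfun i = ∑ i, (fun y => w y • y) (vfun i) from rfl]
    rw [hsumJv (fun y => w y • y)]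
    exact hxrep0.symm
  -- rational structure of the weights
  obtain ⟨e, z, c, C, hz, hrep, hc1, hC0⟩ := rational_structure n sj hsjsum
  -- rational coordinates of the vertices
  choose ρ hρ using fun i j => hvrat (vfun i) (hvmem i) j
  -- denominators
  set M : ℕ := (∏ i, (c i).den) * ∏ i, ∏ k', (C i k').den with hM
  set D : ℕ := ∏ i, ∏ j', (ρ i j').den with hD
  have hMpos : 0 < M := by
    apply Nat.mul_pos <;> 
      exact Finset.prod_pos (fun i _ => by positivity)
  have hDpos : 0 < D := Finset.prod_pos (fun i _ => Finset.prod_pos (fun j' _ => (ρ i j').pos))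
  have hMc : ∀ i, ∃ a : ℤ, (c i : ℝ) * (M : ℝ) = (a : ℝ) := by
    intro i
    apply rat_den_mul
    exact dvd_mul_of_dvd_left (Finset.dvd_prod_of_mem _ (Finset.mem_univ i)) _
  have hMC : ∀ i k', ∃ a : ℤ, (C i k' : ℝ) * (M : ℝ) = (a : ℝ) := by
    intro i k'
    apply rat_den_mul
    apply dvd_mul_of_dvd_right
    calc (C i k').den ∣ ∏ k'', (C i k'').den :=
          Finset.dvd_prod_of_mem (fun k'' => (C i k'').den) (Finset.mem_univ k')
      _ ∣ ∏ i', ∏ k'', (C i' k'').den :=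
          Finset.dvd_prod_of_mem (fun i' => ∏ k'', (C i' k'').den) (Finset.mem_univ i)
  have hDv : ∀ i j', ∃ a : ℤ, vfun i j' * (D : ℝ) = (a : ℝ) := by
    intro i j'
    rw [hρ i j']
    apply rat_den_mul
    rw [hD]
    calc (ρ i j').den ∣ ∏ j'', (ρ i j'').den :=
          Finset.dvd_prod_of_mem (fun j'' => (ρ i j'').den) (Finset.mem_univ j')
      _ ∣ ∏ i', ∏ j'', (ρ i' j'').den :=
          Finset.dvd_prod_of_mem (fun i' => ∏ j'', (ρ i' j'').den) (Finset.mem_univ i)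
  choose ac hac using hMc
  choose aC haC using hMC
  choose dv hdv using hDv
  -- constants
  set CS : ℝ := (∑ i, ∑ k', |(C i k' : ℝ)|) + 1 with hCS
  have hCSpos : 0 < CS := by
    rw [hCS]
    have : (0:ℝ) ≤ ∑ i, ∑ k', |(C i k' : ℝ)| := by positivity
    linarith
  have hCSrow : ∀ i, ∑ k', |(C i k' : ℝ)| ≤ CS := by
    intro i
    rw [hCS]
    have h1 : ∑ k', |(C i k' : ℝ)| ≤ ∑ i, ∑ k', |(C i k' : ℝ)| :=
      Finset.single_le_sum (f := fun i => ∑ k', |(C i k' : ℝ)|)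
        (fun i _ => by positivity) (Finset.mem_univ i)
    linarith
  set VS : ℝ := (∑ i, ‖vfun i‖) + 1 with hVS
  have hVSpos : 0 < VS := by
    rw [hVS]
    have : (0:ℝ) ≤ ∑ i, ‖vfun i‖ := by positivity
    linarith
  have hVSsum : ∑ i, ‖vfun i‖ ≤ VS := by rw [hVS]; linarith
  haveI : Nonempty (Fin n) := ⟨⟨0, hn⟩⟩
  set smin : ℝ := Finset.univ.inf' Finset.univ_nonempty sj with hsmin
  have hsminpos : 0 < smin := by
    rw [hsmin, Finset.lt_inf'_iff]
    exact fun i _ => hwpos i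
  have hsminle : ∀ i, smin ≤ sj i := fun i => Finset.inf'_le sj (Finset.mem_univ i)
  set KMD : ℝ := (k : ℝ) * (M : ℝ) * (D : ℝ) with hKMD
  have hKMDpos : 0 < KMD := by
    rw [hKMD]
    have h1 : (0:ℝ) < k := by exact_mod_cast hk
    have h2 : (0:ℝ) < M := by exact_mod_cast hMpos
    have h3 : (0:ℝ) < D := by exact_mod_cast hDpos
    positivity
  set tol : ℝ := min (smin / (2 * CS)) (ε / (2 * KMD * CS * VS)) with htol'
  have htolpos : 0 < tol := by
    apply lt_min <;> positivity
  have htol1 : CS * tol ≤ smin / 2 := by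
    have h1 : tol ≤ smin / (2 * CS) := min_le_left _ _
    have h2 : CS * tol ≤ CS * (smin / (2 * CS)) :=
      mul_le_mul_of_nonneg_left h1 hCSpos.le
    have h3 : CS * (smin / (2 * CS)) = smin / 2 := by
      field_simp
    linarith
  have htol2 : CS * VS * tol < ε / KMD := by
    have h1 : tol ≤ ε / (2 * KMD * CS * VS) := min_le_right _ _
    have h2 : CS * VS * (ε / (2 * KMD * CS * VS)) = ε / (2 * KMD) := by
      field_simp
    have h3 : CS * VS * tol ≤ ε / (2 * KMD) := by
      have h4 := mul_le_mul_of_nonneg_left h1 (mul_pos hCSpos hVSpos).le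
      rw [h2] at h4
      exact h4
    have h5 : ε / (2 * KMD) < ε / KMD := by
      apply div_lt_div_of_pos_left hε hKMDpos
      linarith
    linarith
  -- apply the approximation machine
  obtain ⟨t, p, μ, htpos, hμ0, hμ1, hzrep, happ⟩ := rational_surround e z hz tol htolpos
  have htR : ∀ j, (0:ℝ) < (t j : ℝ) := fun j => by exact_mod_cast htpos j
  have ht1 : ∀ j, (1:ℝ) ≤ (t j : ℝ) := fun j => by
    have := htpos j
    exact_mod_cast this
  have htnat : ∀ j, (((t j).toNat : ℕ) : ℝ) = (t j : ℝ) := fun j => by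
    have h := Int.toNat_of_nonneg (le_of_lt (htpos j))
    exact_mod_cast congrArg (fun zz : ℤ => (zz : ℝ)) h
  -- approximate weights
  set σ : Fin (e+1) → Fin n → ℝ :=
    fun j i => (c i : ℝ) + ∑ k', (C i k' : ℝ) * ((p j k' : ℝ) / (t j : ℝ)) with hσ
  have hσ_close : ∀ j i, |σ j i - sj i| ≤ CS * tol / (t j : ℝ) := by
    intro j i
    have h1 : σ j i - sj i = ∑ k', (C i k' : ℝ) * ((p j k' : ℝ) / (t j : ℝ) - z k') := by
      have hexp : ∑ k', (C i k' : ℝ) * ((p j k' : ℝ) / (t j : ℝ) - z k')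
          = ∑ k', (C i k' : ℝ) * ((p j k' : ℝ) / (t j : ℝ)) - ∑ k', (C i k' : ℝ) * z k' := by
        rw [← Finset.sum_sub_distrib]
        exact Finset.sum_congr rfl fun k' _ => by ring
      rw [hσ, hrep i, hexp]
      ring
    rw [h1]
    calc |∑ k', (C i k' : ℝ) * ((p j k' : ℝ) / (t j : ℝ) - z k')|
        ≤ ∑ k', |(C i k' : ℝ) * ((p j k' : ℝ) / (t j : ℝ) - z k')| :=
          Finset.abs_sum_le_sum_abs _ _
      _ ≤ ∑ k', |(C i k' : ℝ)| * (tol / (t j : ℝ)) := by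
          apply Finset.sum_le_sum
          intro k' _
          rw [abs_mul]
          apply mul_le_mul_of_nonneg_left _ (abs_nonneg _)
          rw [abs_sub_comm]
          exact le_of_lt (happ j k')
      _ = (∑ k', |(C i k' : ℝ)|) * (tol / (t j : ℝ)) := by rw [Finset.sum_mul]
      _ ≤ CS * (tol / (t j : ℝ)) := by
          apply mul_le_mul_of_nonneg_right (hCSrow i)
          exact div_nonneg htolpos.le (htR j).le
      _ = CS * tol / (t j : ℝ) := by ring
  have hσ_pos : ∀ j i, 0 ≤ σ j i := by
    intro j i
    have h1 := hσ_close j i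
    have h2 := abs_le.mp h1
    have h3 : CS * tol / (t j : ℝ) ≤ CS * tol := by
      rw [div_le_iff₀ (htR j)]
      have h5 := mul_le_mul_of_nonneg_left (ht1 j) (mul_pos hCSpos htolpos).le
      rw [mul_one] at h5
      exact h5
    have h4 := hsminle i
    have h6 := h2.1
    have h7 : CS * tol / (t j : ℝ) ≤ smin / 2 := le_trans h3 htol1
    have e1 : sj i - CS * tol / (t j : ℝ) ≤ σ j i := by linarith only [h6]
    have e2 : smin / 2 ≤ sj i - CS * tol / (t j : ℝ) := by linarith only [h4, h7]
    have e3 : (0:ℝ) < smin / 2 := by positivity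
    exact le_trans (le_trans e3.le e2) e1
  have hσ_sum : ∀ j, ∑ i, σ j i = 1 := by
    intro j
    rw [hσ]
    rw [Finset.sum_add_distrib]
    have h1 : ∑ i, (c i : ℝ) = 1 := by
      have := congrArg (Rat.cast : ℚ → ℝ) hc1
      push_cast at this
      exact this
    have h2 : ∑ i, ∑ k', (C i k' : ℝ) * ((p j k' : ℝ) / (t j : ℝ)) = 0 := by
      rw [Finset.sum_comm]
      apply Finset.sum_eq_zero
      intro k' _
      rw [← Finset.sum_mul]
      have := congrArg (Rat.cast : ℚ → ℝ) (hC0 k')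
      push_cast at this
      rw [this, zero_mul]
    rw [h1, h2, add_zero]
  have hσ_mix : ∀ i, ∑ j, μ j * σ j i = sj i := by
    intro i
    rw [hσ, hrep i]
    have h1 : ∀ j, μ j * ((c i : ℝ) + ∑ k', (C i k' : ℝ) * ((p j k' : ℝ) / (t j : ℝ)))
        = μ j * (c i : ℝ) + ∑ k', (C i k' : ℝ) * (μ j * ((p j k' : ℝ) / (t j : ℝ))) := by
      intro j
      rw [mul_add]
      congr 1
      rw [Finset.mul_sum]
      congr 1; ext k'; ring
    simp_rw [h1]
    rw [Finset.sum_add_distrib]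
    congr 1
    · rw [← Finset.sum_mul, hμ1, one_mul]
    · rw [Finset.sum_comm]
      congr 1; ext k'
      rw [← Finset.mul_sum]
      congr 1
      rw [hzrep k']
  -- the points
  set xs : Fin (e+1) → Fin N → ℝ := fun j => ∑ i, σ j i • vfun i with hxs
  set ks : Fin (e+1) → ℕ := fun j => k * (M * D * (t j).toNat) with hks
  have hksR : ∀ j, ((ks j : ℕ) : ℝ) = KMD * (t j : ℝ) := by
    intro j
    rw [hks]
    simp only
    rw [Nat.cast_mul, Nat.cast_mul, htnat j, hKMD]
    push_cast
    ring
  have hxscoord : ∀ j j', xs j j' = ∑ i, σ j i * vfun i j' := by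
    intro j j'
    have hxsj : xs j = ∑ i, σ j i • vfun i := rfl
    rw [hxsj, Finset.sum_apply]
    congr 1
  refine ⟨e+1, xs, ks, μ, ?_, ?_, ?_, ?_, hμ0, hμ1, ?_⟩
  · -- membership
    intro j
    rw [hPeq]
    have h1 := Finset.centerMass_mem_convexHull (Finset.univ : Finset (Fin n))
      (w := σ j) (fun i _ => hσ_pos j i)
      (by rw [hσ_sum j]; norm_num) (z := vfun)
      (fun i _ => (hvmem i : vfun i ∈ (sfin : Set (Fin N → ℝ))))
    rwa [Finset.centerMass_eq_of_sum_1 _ vfun (hσ_sum j)] at h1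
  · -- ks positive and divisible
    intro j
    constructor
    · have h1 := htpos j
      have : 0 < (t j).toNat := by omega
      exact Nat.mul_pos hk (Nat.mul_pos (Nat.mul_pos hMpos hDpos) this)
    · exact dvd_mul_right k _
  · -- integrality
    intro j j'
    have hdivk : ((ks j : ℕ) : ℝ) / (k : ℝ) = (M : ℝ) * (D : ℝ) * (t j : ℝ) := by
      rw [hksR j, hKMD]
      have hk0 : (k:ℝ) ≠ 0 := by
        have : (0:ℝ) < k := by exact_mod_cast hk
        linarith
      field_simp
    rw [hdivk, hxscoord j j']
    -- per-term integrality
    have hterm : ∀ i, (M : ℝ) * (D : ℝ) * (t j : ℝ) * (σ j i * vfun i j')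
        = ((ac i * t j + ∑ k', aC i k' * p j k' : ℤ) : ℝ) * ((dv i j' : ℤ) : ℝ) := by
      intro i
      have hstep : σ j i * ((M:ℝ) * (t j : ℝ))
          = (ac i : ℝ) * (t j : ℝ) + ∑ k', (aC i k' : ℝ) * (p j k' : ℝ) := by
        rw [hσ]
        simp only
        rw [add_mul, Finset.sum_mul]
        congr 1
        · rw [show (c i : ℝ) * ((M:ℝ) * (t j : ℝ)) = ((c i : ℝ) * (M:ℝ)) * (t j : ℝ) by ring,
            hac i]
        · congr 1; ext k'
          rw [show (C i k' : ℝ) * ((p j k' : ℝ) / (t j : ℝ)) * ((M:ℝ) * (t j : ℝ))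
              = ((C i k' : ℝ) * (M:ℝ)) * ((p j k' : ℝ) * ((t j : ℝ) / (t j : ℝ))) by ring]
          rw [div_self (htR j).ne', mul_one, haC i k']
      have hstep2 : vfun i j' * (D : ℝ) = (dv i j' : ℝ) := hdv i j'
      calc (M : ℝ) * (D : ℝ) * (t j : ℝ) * (σ j i * vfun i j')
          = (σ j i * ((M:ℝ) * (t j : ℝ))) * (vfun i j' * (D : ℝ)) := by ring
        _ = ((ac i : ℝ) * (t j : ℝ) + ∑ k', (aC i k' : ℝ) * (p j k' : ℝ)) * (dv i j' : ℝ) := by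
            rw [hstep, hstep2]
        _ = ((ac i * t j + ∑ k', aC i k' * p j k' : ℤ) : ℝ) * ((dv i j' : ℤ) : ℝ) := by
            push_cast
            ring
    refine ⟨∑ i, (ac i * t j + ∑ k', aC i k' * p j k') * dv i j', ?_⟩
    rw [Finset.mul_sum]
    push_cast
    refine Finset.sum_congr rfl fun i _ => ?_
    have := hterm i
    push_cast at this
    linarith [this]
  · -- norm bound
    intro j
    have hkspos : (0:ℝ) < (ks j : ℝ) := by
      rw [hksR j]
      exact mul_pos hKMDpos (htR j)
    rw [pi_norm_lt_iff (by positivity)]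
    intro j'
    have hcoordeq : (x - xs j) j' = ∑ i, (sj i - σ j i) * vfun i j' := by
      have h1 : (x - xs j) j' = x j' - xs j j' := rfl
      rw [h1, hxscoord j j']
      have h2 : x j' = ∑ i, sj i * vfun i j' := by
        rw [hxvec]
        rw [Finset.sum_apply]
        congr 1
      rw [h2, ← Finset.sum_sub_distrib]
      congr 1; ext i; ring
    rw [Real.norm_eq_abs, hcoordeq]
    calc |∑ i, (sj i - σ j i) * vfun i j'|
        ≤ ∑ i, |(sj i - σ j i) * vfun i j'| := Finset.abs_sum_le_sum_abs _ _
      _ ≤ ∑ i, (CS * tol / (t j : ℝ)) * ‖vfun i‖ := by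
          apply Finset.sum_le_sum
          intro i _
          rw [abs_mul]
          apply _root_.mul_le_mul
          · rw [abs_sub_comm]; exact hσ_close j i
          · exact norm_le_pi_norm (vfun i) j'
          · exact abs_nonneg _
          · exact div_nonneg (mul_nonneg hCSpos.le htolpos.le) (htR j).le
      _ = (CS * tol / (t j : ℝ)) * ∑ i, ‖vfun i‖ := by rw [Finset.mul_sum]
      _ ≤ (CS * tol / (t j : ℝ)) * VS := by
          apply mul_le_mul_of_nonneg_left hVSsum
          exact div_nonneg (mul_nonneg hCSpos.le htolpos.le) (htR j).le
      _ < ε / (ks j : ℝ) := by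
          rw [hksR j]
          rw [div_mul_eq_mul_div, div_lt_div_iff₀ (htR j) (mul_pos hKMDpos (htR j))]
          have h2 : CS * tol * VS * (KMD * (t j : ℝ)) = (CS * VS * tol * KMD) * (t j : ℝ) := by
            ring
          rw [h2]
          have h3 : CS * VS * tol * KMD < ε := by
            have h5 := mul_lt_mul_of_pos_right htol2 hKMDpos
            rw [div_mul_cancel₀ _ hKMDpos.ne'] at h5
            exact h5
          calc (CS * VS * tol * KMD) * (t j : ℝ) < ε * (t j : ℝ) :=
                mul_lt_mul_of_pos_right h3 (htR j)
            _ = ε * (t j : ℝ) := rfl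
  · -- convex combination
    funext j'
    have h1 : (∑ j, μ j • xs j) j' = ∑ j, μ j * xs j j' := by
      rw [Finset.sum_apply]
      congr 1
    rw [h1]
    have h2 : ∀ j, μ j * xs j j' = ∑ i, μ j * (σ j i * vfun i j') := by
      intro j
      rw [hxscoord j j', Finset.mul_sum]
    simp_rw [h2]
    rw [Finset.sum_comm]
    have h3 : ∀ i, ∑ j, μ j * (σ j i * vfun i j') = sj i * vfun i j' := by
      intro i
      have hh : ∑ j, μ j * (σ j i * vfun i j') = (∑ j, μ j * σ j i) * vfun i j' := by
        rw [Finset.sum_mul]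
        congr 1; ext j; ring
      rw [hh, hσ_mix i]
    have h4 : x j' = ∑ i, sj i * vfun i j' := by
      rw [hxvec, Finset.sum_apply]
      congr 1
    rw [h4]
    exact Finset.sum_congr rfl (fun i _ => (h3 i).symm)
end

section
/- Let S ⊆ Z^r be a finitely generated monoid, R = ⊕_{s∈S} R_s an S-graded ring, and S' ⊆ S a finitely generated submonoid. If R is a finitely generated R_0-algebra, then the Veronese subring R' = ⊕_{s∈S'} R_s is a finitely generated R_0-algebra. -/
open Set

section Aux

variable {ι : Type} [Fintype ι]

/-- The weight homomorphism `a ↦ ∑ i, a i • d i`. -/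
def wt {G : Type} [AddCommMonoid G] (d : ι → G) : (ι → ℕ) →+ G where
  toFun a := ∑ i, a i • d i
  map_zero' := by simp
  map_add' a b := by
    simp [Pi.add_apply, add_smul, Finset.sum_add_distrib]

@[simp] lemma wt_apply {G : Type} [AddCommMonoid G] (d : ι → G) (a : ι → ℕ) :
    wt d a = ∑ i, a i • d i := rfl

lemma wt_sub {G : Type} [AddCommGroup G] (d : ι → G) {a b : ι → ℕ} (h : b ≤ a) :
    wt d (a - b) = wt d a - wt d b := by
  have h2 : wt d (a - b) + wt d b = wt d a := by
    rw [← map_add]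
    congr 1
    funext i
    exact tsub_add_cancel_of_le (h i)
  exact eq_sub_of_add_eq h2

lemma sum_lt_of_lt {a b : ι → ℕ} (hle : b ≤ a) (hne : b ≠ a) :
    ∑ i, b i < ∑ i, a i := by
  apply Finset.sum_lt_sum (fun i _ => hle i)
  by_contra hc
  push_neg at hc
  apply hne
  funext i
  exact le_antisymm (hle i) (hc i (Finset.mem_univ i))

/-- A "full" submonoid of `ℕ^ι` (closed under truncated subtraction of smaller members)
is finitely generated (Gordan-type lemma, via Dickson's lemma). -/
lemma full_fg (K : AddSubmonoid (ι → ℕ))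
    (hfull : ∀ a b : ι → ℕ, a ∈ K → b ∈ K → b ≤ a → a - b ∈ K) : K.FG := by
  classical
  set Min : Set (ι → ℕ) := {a | a ∈ K ∧ a ≠ 0 ∧ ∀ b ∈ K, b ≠ 0 → b ≤ a → b = a} with hMin
  have hanti : IsAntichain (· ≤ ·) Min := by
    intro a ha b hb hne hle
    exact hne (hb.2.2 a ha.1 ha.2.1 hle)
  have hpwo : Min.IsPWO := by
    have h : ∀ i : ι, IsWellOrder ((fun _ : ι => ℕ) i) (· < ·) := fun _ => inferInstance
    exact Set.isPWO_of_wellQuasiOrderedLE Min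
  have hfin : Min.Finite := hanti.finite_of_partiallyWellOrderedOn hpwo
  -- every nonzero element of K dominates a minimal one
  have hminex : ∀ N : ℕ, ∀ a, a ∈ K → a ≠ 0 → (∑ i, a i) ≤ N → ∃ m ∈ Min, m ≤ a := by
    intro N
    induction N with
    | zero =>
      intro a ha h0 hs
      exfalso
      apply h0
      funext i
      have := Finset.sum_eq_zero_iff.mp (Nat.le_zero.mp hs) i (Finset.mem_univ i)
      simpa using this
    | succ n ih =>
      intro a ha h0 hs
      by_cases hm : ∀ b ∈ K, b ≠ 0 → b ≤ a → b = a
      · exact ⟨a, ⟨ha, h0, hm⟩, le_refl a⟩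
      · push_neg at hm
        obtain ⟨b, hbK, hb0, hba, hbne⟩ := hm
        have hlt := sum_lt_of_lt hba hbne
        obtain ⟨m, hmMin, hmb⟩ := ih b hbK hb0 (by omega)
        exact ⟨m, hmMin, hmb.trans hba⟩
  have main : ∀ N : ℕ, ∀ a, a ∈ K → (∑ i, a i) ≤ N → a ∈ AddSubmonoid.closure Min := by
    intro N
    induction N with
    | zero =>
      intro a _ hs
      have : a = 0 := by
        funext i
        have := Finset.sum_eq_zero_iff.mp (Nat.le_zero.mp hs) i (Finset.mem_univ i)
        simpa using this
      rw [this]; exact zero_mem _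
    | succ n ih =>
      intro a ha hs
      by_cases h0 : a = 0
      · rw [h0]; exact zero_mem _
      · obtain ⟨m, hmMin, hma⟩ := hminex (n+1) a ha h0 hs
        have hsub : a - m ∈ K := hfull a m ha hmMin.1 hma
        have hsum : (∑ i, (a - m) i) + ∑ i, m i = ∑ i, a i := by
          rw [← Finset.sum_add_distrib]
          congr 1
          funext i
          exact tsub_add_cancel_of_le (hma i)
        have hmpos : 0 < ∑ i, m i := by
          rcases Nat.eq_zero_or_pos (∑ i, m i) with h | h
          · exfalso
            apply hmMin.2.1
            funext i
            have := Finset.sum_eq_zero_iff.mp h i (Finset.mem_univ i)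
            simpa using this
          · exact h
        have hih := ih (a - m) hsub (by omega)
        have : a = (a - m) + m := by
          funext i
          exact (tsub_add_cancel_of_le (hma i)).symm
        rw [this]
        exact add_mem hih (AddSubmonoid.subset_closure hmMin)
  refine ⟨hfin.toFinset, le_antisymm ?_ ?_⟩
  · rw [AddSubmonoid.closure_le]
    intro a ha
    rw [Set.Finite.coe_toFinset] at ha
    exact ha.1
  · intro a ha
    have := main (∑ i, a i) a ha le_rfl
    rwa [Set.Finite.coe_toFinset]

lemma ker_fg {G : Type} [AddCommGroup G] (d : ι → G) :
    ((⊥ : AddSubmonoid G).comap (wt d)).FG := by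
  apply full_fg
  intro a b ha hb hle
  simp only [AddSubmonoid.mem_comap, AddSubmonoid.mem_bot] at *
  rw [wt_sub d hle, ha, hb, sub_zero]

/-- The pullback of a finitely generated submonoid under a weight map is
finitely generated. -/
lemma comap_fg {G : Type} [AddCommGroup G] (d : ι → G) (S' : AddSubmonoid G)
    (hS' : S'.FG) : (S'.comap (wt d)).FG := by
  classical
  obtain ⟨F, hF⟩ := hS'
  let κ := {y // y ∈ F}
  let e : κ → G := Subtype.val
  have heS' : ∀ j : κ, e j ∈ S' := by
    intro j
    rw [← hF]
    exact AddSubmonoid.subset_closure j.2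
  let d' : ι ⊕ κ → G := Sum.elim d (fun j => -(e j))
  let π : ((ι ⊕ κ) → ℕ) →+ (ι → ℕ) :=
    { toFun := fun v => v ∘ Sum.inl
      map_zero' := rfl
      map_add' := fun _ _ => rfl }
  have key : S'.comap (wt d) = ((⊥ : AddSubmonoid G).comap (wt d')).map π := by
    ext a
    simp only [AddSubmonoid.mem_map, AddSubmonoid.mem_comap, AddSubmonoid.mem_bot]
    constructor
    · intro ha
      -- a has weight in S' = closure F ≤ mrange (wt e)
      have hrange : S' ≤ AddMonoidHom.mrange (wt e) := by
        rw [← hF, AddSubmonoid.closure_le]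
        intro y hy
        refine ⟨Pi.single (⟨y, hy⟩ : κ) 1, ?_⟩
        rw [wt_apply]
        rw [Finset.sum_eq_single (⟨y, hy⟩ : κ)]
        · simp [e]
        · intro j _ hj
          rw [Pi.single_eq_of_ne hj, zero_smul]
        · intro h; exact absurd (Finset.mem_univ _) h
      obtain ⟨c, hc⟩ := hrange ha
      refine ⟨Sum.elim a c, ?_, ?_⟩
      · rw [wt_apply, Fintype.sum_sum_type]
        simp only [Sum.elim_inl, Sum.elim_inr, d', smul_neg]
        rw [Finset.sum_neg_distrib, ← sub_eq_add_neg, sub_eq_zero]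
        exact hc.symm
      · funext i; rfl
    · rintro ⟨v, hv, rfl⟩
      rw [wt_apply, Fintype.sum_sum_type] at hv
      simp only [Sum.elim_inl, Sum.elim_inr, d', smul_neg] at hv
      rw [Finset.sum_neg_distrib, ← sub_eq_add_neg, sub_eq_zero] at hv
      have : wt d (v ∘ Sum.inl) = ∑ j : κ, v (Sum.inr j) • e j := by
        rw [wt_apply]; exact hv
      show wt d (v ∘ Sum.inl) ∈ S'
      rw [this]
      exact sum_mem (fun j _ => AddSubmonoid.nsmul_mem _ (heS' j) _)
  rw [key]
  exact (ker_fg d').map π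

end Aux

/-- Lemma 2.25(i).  Let `S ⊆ ℤ^r` be a finitely generated monoid, `R = ⊕_{s ∈ S} R_s`
an `S`-graded ring (graded by `ℤ^r` with all pieces of degrees outside `S` zero), and
`S' ⊆ S` a finitely generated submonoid.  If `R` is a finitely generated `R₀`-algebra,
then the Veronese subring `R' = ⊕_{s ∈ S'} R_s` is a finitely generated `R₀`-algebra.
Finite generation over `R₀ = 𝒜 0` is expressed as: the subring generated by `𝒜 0` and
finitely many elements equals the ring in question (the Veronese subring being the
additive subgroup generated by the pieces `𝒜 s`, `s ∈ S'`). -/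
theorem veronese_finitely_generated (r : ℕ) (R : Type) [CommRing R]
    (𝒜 : (Fin r → ℤ) → AddSubgroup R) [GradedRing 𝒜]
    (S S' : AddSubmonoid (Fin r → ℤ)) (hS : S.FG) (hS' : S'.FG) (hsub : S' ≤ S)
    (hsupp : ∀ s, s ∉ S → 𝒜 s = ⊥)
    (hfg : ∃ T : Finset R, Subring.closure ((𝒜 0 : Set R) ∪ (T : Set R)) = ⊤) :
    ∃ T : Finset R,
      (T : Set R) ⊆
        (AddSubgroup.closure (⋃ s ∈ (S' : Set (Fin r → ℤ)), (𝒜 s : Set R)) : Set R) ∧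
      (Subring.closure ((𝒜 0 : Set R) ∪ (T : Set R)) : Set R) =
        (AddSubgroup.closure (⋃ s ∈ (S' : Set (Fin r → ℤ)), (𝒜 s : Set R)) : Set R) := by
  classical
  obtain ⟨T, hT⟩ := hfg
  -- homogeneous generators
  let ι : Type := Σ t : T, {s : Fin r → ℤ // s ∈ DFinsupp.support (DirectSum.decompose 𝒜 (t : R))}
  let d : ι → (Fin r → ℤ) := fun p => p.2.1
  let x : ι → R := fun p => (DirectSum.decompose 𝒜 (p.1 : R) p.2.1 : R)
  have hx : ∀ i : ι, x i ∈ 𝒜 (d i) := fun p => SetLike.coe_mem _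
  have hgen : Subring.closure ((𝒜 0 : Set R) ∪ Set.range x) = ⊤ := by
    rw [eq_top_iff, ← hT]
    rw [Subring.closure_le]
    rintro y (hy | hy)
    · exact Subring.subset_closure (Or.inl hy)
    · have hyT : y ∈ T := hy
      rw [← DirectSum.sum_support_decompose 𝒜 y]
      apply sum_mem
      intro s hs
      exact Subring.subset_closure (Or.inr ⟨⟨⟨y, hyT⟩, ⟨s, hs⟩⟩, rfl⟩)
  -- the monoid of exponents landing in S'
  obtain ⟨G, hG⟩ := comap_fg d S' hS'
  -- monomials
  let mono : (ι → ℕ) → R := fun a => ∏ i, x i ^ a i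
  have hmono_mem : ∀ a, mono a ∈ 𝒜 (wt d a) := by
    intro a
    rw [wt_apply]
    exact SetLike.prod_pow_mem_graded 𝒜 d x a (fun i _ => hx i)
  have mono_zero : mono 0 = 1 := by simp [mono]
  have mono_add : ∀ a b, mono (a + b) = mono a * mono b := by
    intro a b
    simp [mono, Pi.add_apply, pow_add, Finset.prod_mul_distrib]
  have mono_single : ∀ i : ι, mono (Pi.single i 1) = x i := by
    intro i
    rw [show mono (Pi.single i 1) = ∏ j, x j ^ (Pi.single i 1 : ι → ℕ) j from rfl]
    rw [Fintype.prod_eq_single i (fun j hj => by rw [Pi.single_eq_of_ne hj, pow_zero])]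
    rw [Pi.single_eq_same, pow_one]
  let T' : Finset R := G.image mono
  set Vg : AddSubgroup R :=
    AddSubgroup.closure (⋃ s ∈ (S' : Set (Fin r → ℤ)), (𝒜 s : Set R)) with hVg
  set C : Subring R := Subring.closure ((𝒜 0 : Set R) ∪ (T' : Set R)) with hC
  have hA0V : (𝒜 0 : Set R) ⊆ Vg := by
    intro z hz
    exact AddSubgroup.subset_closure (Set.mem_biUnion S'.zero_mem hz)
  have hT'V : (T' : Set R) ⊆ Vg := by
    intro z hz
    rw [Finset.coe_image] at hz
    obtain ⟨a, haG, rfl⟩ := hz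
    have haM : a ∈ S'.comap (wt d) := by
      rw [← hG]
      exact AddSubmonoid.subset_closure haG
    exact AddSubgroup.subset_closure (Set.mem_biUnion haM (hmono_mem a))
  have hVmul : ∀ u ∈ Vg, ∀ v ∈ Vg, u * v ∈ Vg := by
    intro u hu
    refine AddSubgroup.closure_induction ?_ ?_ ?_ ?_ hu
    · intro z hz v hv
      refine AddSubgroup.closure_induction ?_ ?_ ?_ ?_ hv
      · intro w hw
        obtain ⟨s, hs, hzs⟩ := Set.mem_iUnion₂.mp hz
        obtain ⟨t, ht, hwt⟩ := Set.mem_iUnion₂.mp hw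
        exact AddSubgroup.subset_closure
          (Set.mem_biUnion (S'.add_mem hs ht) (SetLike.mul_mem_graded hzs hwt))
      · rw [mul_zero]; exact zero_mem _
      · intro y w _ _ hy hw
        rw [mul_add]; exact add_mem hy hw
      · intro y _ hy
        rw [mul_neg]; exact neg_mem hy
    · intro v _
      rw [zero_mul]; exact zero_mem _
    · intro y w _ _ hy hw v hv
      rw [add_mul]; exact add_mem (hy v hv) (hw v hv)
    · intro y _ hy v hv
      rw [neg_mul]; exact neg_mem (hy v hv)
  have hCV : (C : Set R) ⊆ (Vg : Set R) := by
    intro z hz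
    refine Subring.closure_induction ?_ ?_ ?_ ?_ ?_ ?_ hz
    · rintro y (hy | hy)
      · exact hA0V hy
      · exact hT'V hy
    · exact zero_mem _
    · exact hA0V (SetLike.one_mem_graded 𝒜)
    · intro y w _ _ hy hw; exact add_mem hy hw
    · intro y _ hy; exact neg_mem hy
    · intro y w _ _ hy hw; exact hVmul y hy w hw
  -- mono of elements of M is in C
  have hMC : ∀ a, a ∈ S'.comap (wt d) → mono a ∈ C := by
    intro a ha
    rw [← hG] at ha
    refine AddSubmonoid.closure_induction ?_ ?_ ?_ ha
    · intro g hg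
      exact Subring.subset_closure (Or.inr (Finset.mem_coe.mpr (Finset.mem_image_of_mem mono hg)))
    · rw [mono_zero]; exact one_mem _
    · intro a b _ _ hac hbc
      rw [mono_add]; exact mul_mem hac hbc
  -- every element of R is a sum of terms r₀ * mono a
  let gens : Set R := {z | ∃ r₀ ∈ (𝒜 0 : Set R), ∃ a : ι → ℕ, z = r₀ * mono a}
  let N : AddSubmonoid R := AddSubmonoid.closure gens
  have hNneg : ∀ z ∈ N, -z ∈ N := by
    intro z hz
    refine AddSubmonoid.closure_induction ?_ ?_ ?_ hz
    · rintro w ⟨r₀, hr₀, a, rfl⟩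
      exact AddSubmonoid.subset_closure ⟨-r₀, neg_mem hr₀, a, by rw [neg_mul]⟩
    · rw [neg_zero]; exact zero_mem _
    · intro y w _ _ hy hw
      rw [neg_add]; exact add_mem hy hw
  have hNmul : ∀ u ∈ N, ∀ v ∈ N, u * v ∈ N := by
    intro u hu
    refine AddSubmonoid.closure_induction ?_ ?_ ?_ hu
    · rintro z ⟨r₀, hr₀, a, rfl⟩ v hv
      refine AddSubmonoid.closure_induction ?_ ?_ ?_ hv
      · rintro w ⟨r₁, hr₁, b, rfl⟩
        have h01 : r₀ * r₁ ∈ (𝒜 0 : Set R) := by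
          have := SetLike.mul_mem_graded hr₀ hr₁
          rwa [zero_add] at this
        refine AddSubmonoid.subset_closure ⟨r₀ * r₁, h01, a + b, ?_⟩
        rw [mono_add, mul_mul_mul_comm]
      · rw [mul_zero]; exact zero_mem _
      · intro y w _ _ hy hw
        rw [mul_add]; exact add_mem hy hw
    · intro v _; rw [zero_mul]; exact zero_mem _
    · intro y w _ _ hy hw v hv
      rw [add_mul]; exact add_mem (hy v hv) (hw v hv)
  have hN : ∀ z : R, z ∈ N := by
    intro z
    have hz : z ∈ Subring.closure ((𝒜 0 : Set R) ∪ Set.range x) := by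
      rw [hgen]; trivial
    refine Subring.closure_induction ?_ ?_ ?_ ?_ ?_ ?_ hz
    · rintro y (hy | ⟨i, rfl⟩)
      · exact AddSubmonoid.subset_closure ⟨y, hy, 0, by rw [mono_zero, mul_one]⟩
      · exact AddSubmonoid.subset_closure
          ⟨1, SetLike.one_mem_graded _, Pi.single i 1, by rw [mono_single, one_mul]⟩
    · exact zero_mem _
    · exact AddSubmonoid.subset_closure ⟨1, SetLike.one_mem_graded _, 0, by rw [mono_zero, mul_one]⟩
    · intro y w _ _ hy hw; exact add_mem hy hw
    · intro y _ hy; exact hNneg y hy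
    · intro y w _ _ hy hw; exact hNmul y hy w hw
  -- the Veronese is contained in C
  have hVC : ∀ s ∈ S', ∀ y ∈ 𝒜 s, y ∈ C := by
    intro s hs y hy
    have key : ∀ z ∈ N, GradedRing.proj 𝒜 s z ∈ C := by
      intro z hz
      refine AddSubmonoid.closure_induction ?_ ?_ ?_ hz
      · rintro w ⟨r₀, hr₀, a, rfl⟩
        have hdeg : r₀ * mono a ∈ 𝒜 (wt d a) := by
          have := SetLike.mul_mem_graded hr₀ (hmono_mem a)
          rwa [zero_add] at this
        by_cases hws : wt d a = s
        · rw [GradedRing.proj_apply, DirectSum.decompose_of_mem_same 𝒜 (hws ▸ hdeg)]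
          refine mul_mem (Subring.subset_closure (Or.inl hr₀)) (hMC a ?_)
          rw [AddSubmonoid.mem_comap, hws]
          exact hs
        · rw [GradedRing.proj_apply, DirectSum.decompose_of_mem_ne 𝒜 hdeg hws]
          exact zero_mem _
      · rw [map_zero]; exact zero_mem _
      · intro y w _ _ hy hw
        rw [map_add]; exact add_mem hy hw
    have h1 : GradedRing.proj 𝒜 s y = y := by
      rw [GradedRing.proj_apply, DirectSum.decompose_of_mem_same 𝒜 hy]
    rw [← h1]
    exact key y (hN y)
  refine ⟨T', hT'V, Set.Subset.antisymm hCV ?_⟩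
  have hle : Vg ≤ C.toAddSubgroup := by
    rw [hVg, AddSubgroup.closure_le]
    intro y hy
    obtain ⟨s, hs, hys⟩ := Set.mem_iUnion₂.mp hy
    exact hVC s hs y hys
  intro z hz
  exact hle hz
end

section
/- Let C ⊆ R^N be a compact convex set, and suppose C has infinitely many extreme points. Then there exists a sequence of distinct extreme points x_n of C converging to a point x ∈ C, and for every δ > 0 there exists a point x' ∉ C with 0 < ‖x − x'‖ < δ such that the open segment (x, x') meets C. -/
open Set Filter Topology

/-- If a compact convex set `C ⊆ ℝ^N` has infinitely many extreme points, then there is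
a sequence of distinct extreme points of `C` converging to a point `x ∈ C` such that for
every `δ > 0` there is a point `x' ∉ C` with `0 < ‖x - x'‖ < δ` whose open segment with
`x` meets `C`.  (This is the 'only if' direction of the polytope characterisation.) -/
theorem accumulation_of_extreme_points {N : ℕ} (C : Set (Fin N → ℝ))
    (hCc : IsCompact C) (hCconv : Convex ℝ C)
    (hinf : (Set.extremePoints ℝ C).Infinite) :
    ∃ (x : Fin N → ℝ) (u : ℕ → Fin N → ℝ),
      x ∈ C ∧ Function.Injective u ∧
      (∀ n, u n ∈ Set.extremePoints ℝ C) ∧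
      Tendsto u atTop (𝓝 x) ∧
      ∀ δ : ℝ, 0 < δ → ∃ x' : Fin N → ℝ, x' ∉ C ∧ 0 < ‖x - x'‖ ∧ ‖x - x'‖ < δ ∧
        (openSegment ℝ x x' ∩ C).Nonempty := by
  classical
  have hsub : Set.extremePoints ℝ C ⊆ C := extremePoints_subset
  let f : ℕ → (Fin N → ℝ) := fun n => ((Set.Infinite.natEmbedding _ hinf) n : Fin N → ℝ)
  have hfS : ∀ n, f n ∈ Set.extremePoints ℝ C := fun n => ((Set.Infinite.natEmbedding _ hinf) n).2
  have hfinj : Function.Injective f := by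
    intro a b hab
    exact (Set.Infinite.natEmbedding _ hinf).injective (Subtype.ext hab)
  obtain ⟨x, hxC, φ, hφ, hlim⟩ := hCc.tendsto_subseq (fun n => hsub (hfS n))
  have huinj : Function.Injective (f ∘ φ) := hfinj.comp hφ.injective
  refine ⟨x, f ∘ φ, hxC, huinj, fun n => hfS _, hlim, ?_⟩
  intro δ hδ
  obtain ⟨M, hM⟩ := (Metric.tendsto_atTop.1 hlim) (δ / 2) (by linarith)
  have hex : ∃ n, dist ((f ∘ φ) n) x < δ / 2 ∧ (f ∘ φ) n ≠ x := by
    by_cases h : ∃ m, (f ∘ φ) m = x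
    · obtain ⟨m, hm⟩ := h
      refine ⟨max M (m + 1), hM _ (le_max_left _ _), fun hx => ?_⟩
      have : max M (m + 1) = m := huinj (hx.trans hm.symm)
      have h1 : m + 1 ≤ max M (m + 1) := le_max_right _ _
      omega
    · exact ⟨M, hM M le_rfl, fun hx => h ⟨M, hx⟩⟩
  obtain ⟨n, hn1, hn2⟩ := hex
  set e : Fin N → ℝ := (f ∘ φ) n with he
  have heS : e ∈ Set.extremePoints ℝ C := hfS _
  have hxe : x ≠ e := fun h => hn2 h.symm
  have hemem : e ∈ openSegment ℝ x ((2 : ℝ) • e - x) :=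
    ⟨1/2, 1/2, by norm_num, by norm_num, by norm_num, by module⟩
  have hnorm : ‖x - ((2 : ℝ) • e - x)‖ = 2 * ‖x - e‖ := by
    have : x - ((2 : ℝ) • e - x) = (2 : ℝ) • (x - e) := by module
    rw [this, norm_smul]
    simp
  have hxe' : 0 < ‖x - e‖ := by
    rw [norm_pos_iff]
    exact sub_ne_zero.mpr hxe
  have hdist : ‖x - e‖ < δ / 2 := by
    have : dist e x = ‖x - e‖ := by rw [dist_comm]; exact dist_eq_norm x e
    rw [← this]
    exact hn1
  refine ⟨(2 : ℝ) • e - x, ?_, ?_, ?_, ⟨e, hemem, hsub heS⟩⟩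
  · intro hx'C
    have := heS.2 hxC hx'C hemem
    exact hxe this
  · rw [hnorm]; linarith
  · rw [hnorm]; linarith
end
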